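/- arXiv:1810.12882 — 4 statements merged into one kernel-verified Lean document; each statement's English description precedes it below -/
import Mathlib

section
/- Let a < b be real numbers, let n be a positive integer, and let q be a real number with n−1 < q < n. Let x : [a,b] → ℝ be n times continuously differentiable. Then for every t ∈ (a,b], the Caputo fractional derivative equals the Riemann–Liouville fractional derivative minus the initial-value correction terms: (1/Γ(n−q)) ∫_a^t (t−τ)^{n−q−1} x^{(n)}(τ) dτ = ⲟD_t^q x(t) − Σ_{k=0}^{n−1} (x^{(k)}(a)/Γ(k−q+1)) (t−a)^{k−q}, where ⲟD_t^q x(t) denotes the n-th derivative, evaluated at t, of the function s ↦ (1/Γ(n−q)) ∫_a^s (s−τ)^{n−q−1} x(τ) dτ. -/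
open MeasureTheory intervalIntegral Set

namespace CaputoAux

noncomputable def J (a p : ℝ) (h : ℝ → ℝ) (s : ℝ) : ℝ :=
  ∫ τ in a..s, (s - τ) ^ (p - 1) * h τ

noncomputable def G (a p : ℝ) (h : ℝ → ℝ) (s : ℝ) : ℝ :=
  ∫ u, Set.indicator (Ioc 0 (s - a)) (fun u => u ^ (p - 1) * h (s - u)) u

lemma intInt {a s r : ℝ} (hr : -1 < r) (has : a ≤ s) {g : ℝ → ℝ}
    (hg : ContinuousOn g (Set.Icc a s)) :
    IntervalIntegrable (fun τ => (s - τ) ^ r * g τ) volume a s := by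
  have h1 : IntervalIntegrable (fun τ => (s - τ) ^ r) volume a s := by
    have := (intervalIntegrable_rpow' (a := s - a) (b := s - s) hr).comp_sub_left s
    simpa using this
  exact h1.mul_continuousOn (by rwa [uIcc_of_le has])

lemma ibp {a b s p : ℝ} (hp : 0 < p) (has : a ≤ s) (hsb : s ≤ b)
    {g g' : ℝ → ℝ} (hg : ContinuousOn g (Icc a b))
    (hg' : ∀ τ ∈ Icc a b, HasDerivWithinAt g (g' τ) (Icc a b) τ)
    (hg'c : ContinuousOn g' (Icc a b)) :
    ∫ τ in a..s, (s - τ) ^ (p - 1) * g τ =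
      g a * (s - a) ^ p / p + (1 / p) * ∫ τ in a..s, (s - τ) ^ p * g' τ := by
  have hIcc : Icc a s ⊆ Icc a b := Icc_subset_Icc le_rfl hsb
  rcases eq_or_lt_of_le has with rfl | hlt
  · simp [Real.zero_rpow (ne_of_gt hp)]
  have hcp : Continuous fun τ => (s - τ) ^ p :=
    (Real.continuous_rpow_const hp.le).comp (continuous_const.sub continuous_id)
  have hF : ContinuousOn (fun τ => -(s - τ) ^ p / p * g τ) (Icc a s) :=
    ((hcp.neg.div_const p).continuousOn).mul (hg.mono hIcc)
  have hint1 : IntervalIntegrable (fun τ => (s - τ) ^ (p - 1) * g τ) volume a s :=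
    intInt (by linarith) has (hg.mono hIcc)
  have hint2 : IntervalIntegrable (fun τ => (s - τ) ^ p * g' τ) volume a s :=
    intInt (by linarith) has (hg'c.mono hIcc)
  have key : ∫ τ in a..s, ((s - τ) ^ (p - 1) * g τ - (1 / p) * ((s - τ) ^ p * g' τ))
      = (fun τ => -(s - τ) ^ p / p * g τ) s - (fun τ => -(s - τ) ^ p / p * g τ) a := by
    apply integral_eq_sub_of_hasDeriv_right_of_le has hF
    · intro τ hτ
      have hτs : 0 < s - τ := by linarith [hτ.2]
      have h1 : HasDerivAt (fun τ : ℝ => s - τ) (-1) τ := (hasDerivAt_id τ).const_sub s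
      have h2 : HasDerivAt (fun y : ℝ => y ^ p) (p * (s - τ) ^ (p - 1)) (s - τ) :=
        Real.hasDerivAt_rpow_const (Or.inl (ne_of_gt hτs))
      have h3 : HasDerivAt (fun τ => (s - τ) ^ p) (p * (s - τ) ^ (p - 1) * (-1)) τ :=
        h2.comp τ h1
      have hgτ : HasDerivAt g (g' τ) τ := by
        refine (hg' τ ⟨le_of_lt hτ.1, le_trans (le_of_lt hτ.2) hsb⟩).hasDerivAt ?_
        exact Filter.mem_of_superset (Ioo_mem_nhds hτ.1 (lt_of_lt_of_le hτ.2 hsb)) Ioo_subset_Icc_self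
      have h4 : HasDerivAt (fun τ => -(s - τ) ^ p / p * g τ)
          (-(p * (s - τ) ^ (p - 1) * -1) / p * g τ + -(s - τ) ^ p / p * g' τ) τ :=
        ((h3.neg.div_const p).mul hgτ)
      have heq : -(p * (s - τ) ^ (p - 1) * -1) / p * g τ + -(s - τ) ^ p / p * g' τ
          = (s - τ) ^ (p - 1) * g τ - 1 / p * ((s - τ) ^ p * g' τ) := by
        field_simp
        ring
      rw [heq] at h4
      exact h4.hasDerivWithinAt
    · exact hint1.sub (hint2.const_mul (1 / p))
  rw [intervalIntegral.integral_sub hint1 (hint2.const_mul (1 / p)),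
    intervalIntegral.integral_const_mul] at key
  have h0 : ((s : ℝ) - s) ^ p = 0 := by
    simp [Real.zero_rpow (ne_of_gt hp)]
  rw [sub_eq_iff_eq_add] at key
  rw [key]
  simp only [sub_self, Real.zero_rpow (ne_of_gt hp)]
  ring

lemma contG {a p : ℝ} {h : ℝ → ℝ} (hp : 0 < p) (hh : Continuous h) {M : ℝ}
    (hM : ∀ s, ‖h s‖ ≤ M) : Continuous (G a p h) := by
  have hM0 : 0 ≤ M := le_trans (norm_nonneg _) (hM 0)
  rw [continuous_iff_continuousAt]
  intro t
  have hbint : Integrable (Set.indicator (Ioc 0 (|t - a| + 1)) fun u => u ^ (p - 1) * M) volume := by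
    refine IntegrableOn.integrable_indicator ?_ measurableSet_Ioc
    rw [← intervalIntegrable_iff_integrableOn_Ioc_of_le (by positivity)]
    exact (intervalIntegrable_rpow' (by linarith)).mul_const M
  refine continuousAt_of_dominated ?_ ?_ hbint ?_
  · filter_upwards with s
    refine ((Measurable.indicator ?_ measurableSet_Ioc).aestronglyMeasurable)
    exact (measurable_id.pow measurable_const).mul (hh.measurable.comp (measurable_const.sub measurable_id))
  · filter_upwards [Metric.ball_mem_nhds t one_pos] with s hs
    filter_upwards with u
    by_cases hu : u ∈ Ioc 0 (s - a)
    · rw [Set.indicator_of_mem hu]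
      have hu0 : (0 : ℝ) < u := hu.1
      have hub : u ≤ |t - a| + 1 := by
        have : |s - t| < 1 := by simpa [Real.dist_eq] using hs
        have h1 : s - a ≤ |t - a| + 1 := by
          have : s - a = (s - t) + (t - a) := by ring
          rw [this]
          have := abs_le.mp (le_of_lt ‹|s - t| < 1›)
          have := le_abs_self (t - a)
          linarith
        linarith [hu.2]
      have hmem : u ∈ Ioc (0:ℝ) (|t - a| + 1) := ⟨hu0, hub⟩
      rw [Set.indicator_of_mem hmem]
      have : ‖u ^ (p - 1) * h (s - u)‖ = u ^ (p - 1) * ‖h (s - u)‖ := by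
        rw [norm_mul, Real.norm_eq_abs (u ^ (p - 1)), abs_of_nonneg (Real.rpow_nonneg hu0.le _)]
      rw [this]
      exact mul_le_mul_of_nonneg_left (hM _) (Real.rpow_nonneg hu0.le _)
    · rw [Set.indicator_of_notMem hu]
      simp only [norm_zero]
      exact Set.indicator_nonneg (fun u hu => mul_nonneg (Real.rpow_nonneg hu.1.le _) hM0) _
  · have : ∀ᵐ u : ℝ, u ≠ t - a := by
      rw [MeasureTheory.ae_iff]
      simpa using (by simp : {u : ℝ | u = t - a} = {t - a}) ▸ Real.volume_singleton
    filter_upwards [this] with u hu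
    rcases le_or_gt u 0 with h0 | h0
    · have : ∀ s, Set.indicator (Ioc 0 (s - a)) (fun u => u ^ (p - 1) * h (s - u)) u = 0 :=
        fun s => Set.indicator_of_notMem (fun hmem => absurd hmem.1 (not_lt.2 h0)) _
      simpa [this] using continuousAt_const
    rcases lt_or_gt_of_ne hu with hlt | hgt
    · -- u < t - a : eventually equal to the smooth function
      have hev : ∀ᶠ s in nhds t, Set.indicator (Ioc 0 (s - a)) (fun u => u ^ (p - 1) * h (s - u)) u
          = u ^ (p - 1) * h (s - u) := by
        have hopen : IsOpen {s : ℝ | u < s - a} :=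
          isOpen_lt continuous_const (continuous_id.sub continuous_const)
        have : {s : ℝ | u < s - a} ∈ nhds t := hopen.mem_nhds (by simpa using hlt)
        filter_upwards [this] with s hs
        have hmem : u ∈ Ioc (0:ℝ) (s - a) := ⟨h0, hs.le⟩
        exact Set.indicator_of_mem hmem _
      have hc : ContinuousAt (fun s => u ^ (p - 1) * h (s - u)) t :=
        (continuous_const.mul (hh.comp (continuous_id.sub continuous_const))).continuousAt
      exact hc.congr (hev.mono fun s hs => hs.symm) |>.congr (Filter.EventuallyEq.refl _ _)
    · -- u > t - a : eventually 0
      have hev : ∀ᶠ s in nhds t, Set.indicator (Ioc 0 (s - a)) (fun u => u ^ (p - 1) * h (s - u)) u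
          = 0 := by
        have hopen : IsOpen {s : ℝ | s - a < u} :=
          isOpen_lt (continuous_id.sub continuous_const) continuous_const
        have : {s : ℝ | s - a < u} ∈ nhds t := hopen.mem_nhds (by simpa using hgt)
        filter_upwards [this] with s hs
        exact Set.indicator_of_notMem (fun hmem => absurd hmem.2 (not_le.2 hs)) _
      exact continuousAt_const.congr (hev.mono fun s hs => hs.symm)

lemma JeqG {a p : ℝ} {h : ℝ → ℝ} (s : ℝ) (has : a ≤ s) : J a p h s = G a p h s := by
  unfold J G
  have h1 := intervalIntegral.integral_comp_sub_left (a := a) (b := s)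
    (fun u => u ^ (p - 1) * h (s - u)) s
  simp only [sub_sub_cancel, sub_self] at h1
  rw [h1, integral_of_le (by linarith), ← MeasureTheory.integral_indicator measurableSet_Ioc]

/-- integral of `(u-τ)^(p-1)` over `u ∈ τ..s`. -/
lemma rint {τ s p : ℝ} (hp : 0 < p) (hτs : τ ≤ s) :
    ∫ u in τ..s, (u - τ) ^ (p - 1) = (s - τ) ^ p / p := by
  have h1 := intervalIntegral.integral_comp_sub_right (a := τ) (b := s)
    (fun w => w ^ (p - 1)) τ
  rw [h1]
  simp only [sub_self]
  rw [integral_rpow (Or.inl (by linarith))]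
  rw [Real.zero_rpow (by linarith), sub_add_cancel]
  ring_nf

/-- the split integral of the truncated kernel, with a constant. -/
lemma claim2 {a s τ p : ℝ} (hp : 0 < p) (hp1 : p ≠ 1) (haτ : a ≤ τ) (hτs : τ ≤ s) (c : ℝ) :
    ∫ u in Ioc a s, max (u - τ) 0 ^ (p - 1) * c = (s - τ) ^ p / p * c := by
  have hzero : ∀ u ∈ Ioc a τ, max (u - τ) 0 ^ (p - 1) * c = 0 := by
    intro u hu
    rw [max_eq_right (by linarith [hu.2]), Real.zero_rpow (by
      intro hc; apply hp1; linarith [hc])]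
    · ring
  have heq : ∀ u ∈ Ioc τ s, max (u - τ) 0 ^ (p - 1) * c = (u - τ) ^ (p - 1) * c := by
    intro u hu
    rw [max_eq_left (by linarith [hu.1.le])]
  have hsplit : Ioc a s = Ioc a τ ∪ Ioc τ s := (Ioc_union_Ioc_eq_Ioc haτ hτs).symm
  have hint2 : IntegrableOn (fun u => (u - τ) ^ (p - 1) * c) (Ioc τ s) volume := by
    have : IntervalIntegrable (fun u => (u - τ) ^ (p - 1) * c) volume τ s := by
      have h0 := (intervalIntegrable_rpow' (r := p - 1) (a := (0:ℝ)) (b := s - τ)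
        (by linarith)).comp_sub_right τ
      simpa using h0.mul_const c
    rwa [intervalIntegrable_iff_integrableOn_Ioc_of_le hτs] at this
  rw [hsplit, setIntegral_union (Ioc_disjoint_Ioc_of_le le_rfl) measurableSet_Ioc]
  · rw [setIntegral_congr_fun measurableSet_Ioc hzero, setIntegral_congr_fun measurableSet_Ioc heq]
    simp only [MeasureTheory.integral_zero, zero_add]
    rw [← intervalIntegral.integral_of_le hτs]
    rw [intervalIntegral.integral_mul_const, rint hp hτs]
  · exact (integrableOn_zero.congr_fun (fun u hu => (hzero u hu).symm) measurableSet_Ioc)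
  · exact hint2.congr_fun (fun u hu => (heq u hu).symm) measurableSet_Ioc

lemma integrableOn_claim2 {a s τ p : ℝ} (hp : 0 < p) (hp1 : p ≠ 1) (haτ : a ≤ τ) (hτs : τ ≤ s)
    (c : ℝ) : IntegrableOn (fun u => max (u - τ) 0 ^ (p - 1) * c) (Ioc a s) volume := by
  have hzero : ∀ u ∈ Ioc a τ, max (u - τ) 0 ^ (p - 1) * c = 0 := by
    intro u hu
    rw [max_eq_right (by linarith [hu.2]), Real.zero_rpow (by intro hc; apply hp1; linarith)]
    ring
  have heq : ∀ u ∈ Ioc τ s, max (u - τ) 0 ^ (p - 1) * c = (u - τ) ^ (p - 1) * c := by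
    intro u hu
    rw [max_eq_left (by linarith [hu.1.le])]
  have hint2 : IntegrableOn (fun u => (u - τ) ^ (p - 1) * c) (Ioc τ s) volume := by
    have : IntervalIntegrable (fun u => (u - τ) ^ (p - 1) * c) volume τ s := by
      have h0 := (intervalIntegrable_rpow' (r := p - 1) (a := (0:ℝ)) (b := s - τ)
        (by linarith)).comp_sub_right τ
      simpa using h0.mul_const c
    rwa [intervalIntegrable_iff_integrableOn_Ioc_of_le hτs] at this
  rw [(Ioc_union_Ioc_eq_Ioc haτ hτs).symm]
  exact (integrableOn_zero.congr_fun (fun u hu => (hzero u hu).symm) measurableSet_Ioc).union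
    (hint2.congr_fun (fun u hu => (heq u hu).symm) measurableSet_Ioc)

lemma fub {a s p : ℝ} (hp : 0 < p) (hp1 : p ≠ 1) (has : a ≤ s) {h : ℝ → ℝ}
    (hh : Continuous h) {M : ℝ} (hM : ∀ u, ‖h u‖ ≤ M) :
    ∫ u in a..s, J a p h u = (1 / p) * ∫ τ in a..s, (s - τ) ^ p * h τ := by
  have hM0 : 0 ≤ M := le_trans (norm_nonneg _) (hM 0)
  set K : ℝ → ℝ → ℝ := fun u τ => max (u - τ) 0 ^ (p - 1) * h τ with hKdef
  have hKmeas : Measurable (Function.uncurry K) := by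
    apply Measurable.mul
    · exact ((continuous_fst.sub continuous_snd).max continuous_const).measurable.pow
        measurable_const
    · exact hh.measurable.comp measurable_snd
  -- integrability on the product
  have hKint : Integrable (Function.uncurry K)
      ((volume.restrict (Ioc a s)).prod (volume.restrict (Ioc a s))) := by
    rw [integrable_prod_iff' hKmeas.aestronglyMeasurable]
    constructor
    · rw [ae_restrict_iff' measurableSet_Ioc]
      filter_upwards with τ hτ
      exact integrableOn_claim2 hp hp1 hτ.1.le hτ.2 (h τ)
    · refine Integrable.mono' (integrable_const ((s - a) ^ p / p * M)) ?_ ?_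
      · exact (hKmeas.stronglyMeasurable.norm.integral_prod_left').aestronglyMeasurable
      · rw [ae_restrict_iff' measurableSet_Ioc]
        filter_upwards with τ hτ
        have hnorm : ∀ u, ‖Function.uncurry K (u, τ)‖ = max (u - τ) 0 ^ (p - 1) * ‖h τ‖ := by
          intro u
          rw [Function.uncurry, norm_mul, Real.norm_eq_abs (max (u - τ) 0 ^ (p - 1)),
            abs_of_nonneg (Real.rpow_nonneg (le_max_right _ _) _)]
        have hb2 : (∫ u in Ioc a s, ‖Function.uncurry K (u, τ)‖) = (s - τ) ^ p / p * ‖h τ‖ := by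
          simp only [hnorm]
          exact claim2 hp hp1 hτ.1.le hτ.2 ‖h τ‖
        rw [Real.norm_eq_abs, hb2, abs_of_nonneg (mul_nonneg (div_nonneg
          (Real.rpow_nonneg (by linarith [hτ.2]) _) hp.le) (norm_nonneg _))]
        have h1 : (s - τ) ^ p ≤ (s - a) ^ p :=
          Real.rpow_le_rpow (by linarith [hτ.2]) (by linarith [hτ.1]) hp.le
        exact mul_le_mul (div_le_div_of_nonneg_right h1 hp.le) (hM τ) (norm_nonneg _)
          (div_nonneg (Real.rpow_nonneg (by linarith) _) hp.le)
  -- now swap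
  have hswap := MeasureTheory.integral_integral_swap (μ := volume.restrict (Ioc a s))
    (ν := volume.restrict (Ioc a s)) (f := K) hKint
  -- LHS : ∫ u, inner = J u
  have hL : (∫ u in Ioc a s, ∫ τ in Ioc a s, K u τ) = ∫ u in Ioc a s, J a p h u := by
    refine setIntegral_congr_fun measurableSet_Ioc (fun u hu => ?_)
    have hzero : ∀ τ ∈ Ioc u s, K u τ = 0 := by
      intro τ hτ
      simp only [hKdef]
      rw [max_eq_right (by linarith [hτ.1]), Real.zero_rpow (by intro hc; apply hp1; linarith)]
      ring
    have heq : ∀ τ ∈ Ioc a u, K u τ = (u - τ) ^ (p - 1) * h τ := by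
      intro τ hτ
      simp only [hKdef]
      rw [max_eq_left (by linarith [hτ.2])]
    have hint1 : IntegrableOn (fun τ => (u - τ) ^ (p - 1) * h τ) (Ioc a u) volume := by
      have := intInt (a := a) (s := u) (by linarith : (-1:ℝ) < p - 1) hu.1.le hh.continuousOn
      rwa [intervalIntegrable_iff_integrableOn_Ioc_of_le hu.1.le] at this
    rw [(Ioc_union_Ioc_eq_Ioc hu.1.le hu.2).symm,
      setIntegral_union (Ioc_disjoint_Ioc_of_le le_rfl) measurableSet_Ioc
        (hint1.congr_fun (fun τ hτ => (heq τ hτ).symm) measurableSet_Ioc)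
        (integrableOn_zero.congr_fun (fun τ hτ => (hzero τ hτ).symm) measurableSet_Ioc),
      setIntegral_congr_fun measurableSet_Ioc heq, setIntegral_congr_fun measurableSet_Ioc hzero]
    simp only [MeasureTheory.integral_zero, add_zero]
    rw [J, ← intervalIntegral.integral_of_le hu.1.le]
  -- RHS : ∫ τ, inner = (s-τ)^p/p * h τ
  have hR : (∫ τ in Ioc a s, ∫ u in Ioc a s, K u τ) = ∫ τ in Ioc a s, (s - τ) ^ p / p * h τ := by
    refine setIntegral_congr_fun measurableSet_Ioc (fun τ hτ => ?_)
    simpa only [hKdef] using claim2 hp hp1 hτ.1.le hτ.2 (h τ)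
  rw [hL, hR] at hswap
  rw [intervalIntegral.integral_of_le has, hswap, intervalIntegral.integral_of_le has,
    ← MeasureTheory.integral_const_mul]
  refine setIntegral_congr_fun measurableSet_Ioc (fun τ hτ => ?_)
  ring

lemma contJ_Ici {a p : ℝ} {h : ℝ → ℝ} (hp : 0 < p) (hh : Continuous h) {M : ℝ}
    (hM : ∀ s, ‖h s‖ ≤ M) : ContinuousOn (J a p h) (Ici a) :=
  ((contG hp hh hM).continuousOn).congr (fun s hs => JeqG s hs)

lemma contJ_at {a p : ℝ} {h : ℝ → ℝ} (hp : 0 < p) (hh : Continuous h) {M : ℝ}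
    (hM : ∀ s, ‖h s‖ ≤ M) {t : ℝ} (hat : a < t) : ContinuousAt (J a p h) t := by
  refine ((contG (a := a) hp hh hM).continuousAt).congr ?_
  filter_upwards [IsOpen.mem_nhds isOpen_Ioi hat] with s hs
  exact (JeqG s (le_of_lt hs)).symm

lemma hasDerivAt_J {a p : ℝ} (hp : 0 < p) (hp1 : p ≠ 1) {h : ℝ → ℝ} (hh : Continuous h)
    {M : ℝ} (hM : ∀ u, ‖h u‖ ≤ M) {t : ℝ} (hat : a < t) :
    HasDerivAt (J a (p + 1) h) (p * J a p h t) t := by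
  have hint : IntervalIntegrable (J a p h) volume a t :=
    ((contJ_Ici hp hh hM).mono (by rw [uIcc_of_le hat.le]; exact Icc_subset_Ici_self)
      : ContinuousOn _ (uIcc a t)).intervalIntegrable
  have hmeas : StronglyMeasurableAtFilter (J a p h) (nhds t) volume :=
    ContinuousAt.stronglyMeasurableAtFilter (isOpen_Ioi (a := a))
      (fun s hs => contJ_at hp hh hM hs) t hat
  have hFTC : HasDerivAt (fun u => ∫ s in a..u, J a p h s) (J a p h t) t :=
    intervalIntegral.integral_hasDerivAt_right hint hmeas (contJ_at hp hh hM hat)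
  have h2 := hFTC.const_mul p
  refine h2.congr_of_eventuallyEq ?_
  filter_upwards [IsOpen.mem_nhds isOpen_Ioi hat] with s hs
  rw [fub hp hp1 (le_of_lt hs) hh hM]
  have hpne : p ≠ 0 := ne_of_gt hp
  rw [J]
  have : p + 1 - 1 = p := by ring
  rw [this]
  field_simp

lemma not_int_v {v : ℝ} (h0 : 0 < v) (h1 : v < 1) (z : ℤ) : v ≠ (z : ℝ) := by
  intro h
  rw [h] at h0 h1
  have hz0 : 0 < z := by exact_mod_cast h0
  have hz1 : z < 1 := by exact_mod_cast h1
  omega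

lemma gamma_prod {y : ℝ} (hy : ∀ i : ℕ, y - i ≠ 0) (m : ℕ) :
    Real.Gamma (y + 1) = (∏ i ∈ Finset.range m, (y - i)) * Real.Gamma (y + 1 - m) := by
  induction m with
  | zero => simp
  | succ m ih =>
    rw [ih, Finset.prod_range_succ]
    have h1 : y + 1 - m = (y - m) + 1 := by ring
    rw [h1, Real.Gamma_add_one (hy m)]
    have h2 : y + 1 - (m + 1 : ℕ) = y - m := by push_cast; ring
    rw [h2]
    ring

lemma iteratedDerivWithin_congr_set' {f : ℝ → ℝ} {s s' : Set ℝ} {x : ℝ} (n : ℕ)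
    (h : s =ᶠ[nhds x] s') : iteratedDerivWithin n f s x = iteratedDerivWithin n f s' x := by
  simp only [iteratedDerivWithin, iteratedFDerivWithin_congr_set h n]

end CaputoAux

open CaputoAux MeasureTheory intervalIntegral Set

/-- **Relation between the Caputo and Riemann–Liouville fractional derivatives.**
Let `a < b`, let `n` be a positive integer and `n - 1 < q < n`. If `x` is `n` times
continuously differentiable on `[a, b]`, then for every `t ∈ (a, b]` the Caputo
fractional derivative of order `q` of `x` at `t` equals the Riemann–Liouville
fractional derivative of order `q` of `x` at `t` (that is, the `n`-th derivative at `t`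
of `s ↦ (1/Γ(n-q)) ∫_a^s (s-τ)^(n-q-1) x(τ) dτ`) minus the initial-value correction
terms `Σ_{k=0}^{n-1} (x^{(k)}(a)/Γ(k-q+1)) (t-a)^(k-q)`. -/
theorem caputo_eq_riemannLiouville_sub_initial_terms
    (a b : ℝ) (hab : a < b) (n : ℕ) (hn : 0 < n) (q : ℝ)
    (hq1 : (n : ℝ) - 1 < q) (hq2 : q < n)
    (x : ℝ → ℝ) (hx : ContDiffOn ℝ n x (Set.Icc a b))
    (t : ℝ) (ht : t ∈ Set.Ioc a b) :
    (1 / Real.Gamma ((n : ℝ) - q)) *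
        ∫ τ in a..t, (t - τ) ^ ((n : ℝ) - q - 1) * iteratedDerivWithin n x (Set.Icc a b) τ
      = iteratedDerivWithin n
          (fun s => (1 / Real.Gamma ((n : ℝ) - q)) *
            ∫ τ in a..s, (s - τ) ^ ((n : ℝ) - q - 1) * x τ) (Set.Icc a b) t
        - ∑ k ∈ Finset.range n,
            (iteratedDerivWithin k x (Set.Icc a b) a / Real.Gamma ((k : ℝ) - q + 1)) *
              (t - a) ^ ((k : ℝ) - q) := by
  obtain ⟨hat, htb⟩ := ht
  set v : ℝ := (n : ℝ) - q with hv
  have hv0 : 0 < v := by rw [hv]; linarith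
  have hv1 : v < 1 := by rw [hv]; linarith
  have hvint : ∀ z : ℤ, v ≠ (z : ℝ) := not_int_v hv0 hv1
  have U : UniqueDiffOn ℝ (Icc a b) := uniqueDiffOn_Icc hab
  set X : ℕ → ℝ → ℝ := fun k => iteratedDerivWithin k x (Icc a b) with hX
  have hXc : ∀ k, k ≤ n → ContinuousOn (X k) (Icc a b) := fun k hk =>
    hx.continuousOn_iteratedDerivWithin (by exact_mod_cast hk) U
  have hXd : ∀ k, k < n → ∀ τ ∈ Icc a b, HasDerivWithinAt (X k) (X (k + 1) τ) (Icc a b) τ := by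
    intro k hk τ hτ
    have hdiff := hx.differentiableOn_iteratedDerivWithin (m := k) (by exact_mod_cast hk) U
    have h1 := (hdiff τ hτ).hasDerivWithinAt
    rwa [← iteratedDerivWithin_succ] at h1
  -- clamp extension of the top derivative
  set cl : ℝ → ℝ := fun s => max a (min s b) with hcl
  have hclmem : ∀ s, cl s ∈ Icc a b := fun s =>
    ⟨le_max_left _ _, max_le hab.le (min_le_right _ _)⟩
  have hcleq : ∀ s ∈ Icc a b, cl s = s := by
    intro s hs
    rw [hcl]
    simp only
    rw [min_eq_left hs.2, max_eq_right hs.1]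
  set h : ℝ → ℝ := fun s => X n (cl s) with hhdef
  have hhc : Continuous h := (hXc n le_rfl).comp_continuous
    (continuous_const.max (continuous_id.min continuous_const)) hclmem
  have hfh : ∀ s ∈ Icc a b, h s = X n s := by
    intro s hs
    rw [hhdef]
    simp only
    rw [hcleq s hs]
  obtain ⟨M, hM⟩ : ∃ M, ∀ u, ‖h u‖ ≤ M := by
    obtain ⟨M, hM⟩ := (isCompact_Icc (a := a) (b := b)).exists_bound_of_continuousOn
      (hXc n le_rfl)
    exact ⟨M, fun u => hM _ (hclmem u)⟩
  have hJcongr : ∀ p : ℝ, ∀ s ∈ Icc a b, J a p (X n) s = J a p h s := by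
    intro p s hs
    apply intervalIntegral.integral_congr
    intro τ hτ
    rw [uIcc_of_le hs.1] at hτ
    show (s - τ) ^ (p - 1) * X n τ = (s - τ) ^ (p - 1) * h τ
    rw [hfh τ ⟨hτ.1, le_trans hτ.2 hs.2⟩]
  have hΓpos : ∀ r : ℝ, 0 < r → Real.Gamma r ≠ 0 := fun r hr =>
    ne_of_gt (Real.Gamma_pos_of_pos hr)
  -- Step 1: repeated integration by parts
  have L2 : ∀ k, k ≤ n → ∀ s ∈ Icc a b, J a v x s =
      Real.Gamma v *
        (∑ j ∈ Finset.range k, X j a * (s - a) ^ (v + j) / Real.Gamma (v + j + 1))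
      + (Real.Gamma v / Real.Gamma (v + k)) * J a (v + k) (X k) s := by
    intro k
    induction k with
    | zero =>
      intro _ s hs
      have hX0 : X 0 = x := iteratedDerivWithin_zero
      simp only [Finset.range_zero, Finset.sum_empty, mul_zero, zero_add, Nat.cast_zero,
        add_zero, hX0]
      rw [div_self (hΓpos v hv0), one_mul]
    | succ k ih =>
      intro hk s hs
      have hkn : k < n := hk
      have hp : 0 < v + (k : ℝ) := by positivity
      have hibp := ibp (p := v + (k : ℝ)) hp hs.1 hs.2 (hXc k hkn.le) (hXd k hkn)
        (hXc (k + 1) hk)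
      rw [ih hkn.le s hs]
      have hJk : J a (v + (k : ℝ)) (X k) s
          = X k a * (s - a) ^ (v + (k : ℝ)) / (v + (k : ℝ))
            + (1 / (v + (k : ℝ))) * J a (v + ((k : ℕ) + 1 : ℕ)) (X (k + 1)) s := by
        rw [J, J, hibp]
        have hcast : v + (((k : ℕ) + 1 : ℕ) : ℝ) - 1 = v + (k : ℝ) := by push_cast; ring
        rw [hcast]
      rw [hJk, Finset.sum_range_succ]
      have hcast : (((k : ℕ) + 1 : ℕ) : ℝ) = (k : ℝ) + 1 := by push_cast; ring
      rw [hcast]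
      have hGam : Real.Gamma (v + ((k : ℝ) + 1)) = (v + k) * Real.Gamma (v + k) := by
        have : v + ((k : ℝ) + 1) = (v + k) + 1 := by ring
        rw [this, Real.Gamma_add_one (ne_of_gt hp)]
      have h1 : Real.Gamma (v + (k:ℝ)) ≠ 0 := hΓpos _ hp
      have h2 : v + (k:ℝ) ≠ 0 := ne_of_gt hp
      have h3 : v + (k : ℝ) + 1 = v + ((k:ℝ) + 1) := by ring
      rw [h3, hGam]
      field_simp
      ring

  -- localization near t
  set c : ℝ := (a + t) / 2 with hcdef
  have hac : a < c := by rw [hcdef]; linarith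
  have hct : c < t := by rw [hcdef]; linarith
  have hcb : c < b := lt_of_lt_of_le hct htb
  have U' : UniqueDiffOn ℝ (Icc c b) := uniqueDiffOn_Icc hcb
  set W : ℝ → ℝ := fun s =>
    (∑ k ∈ Finset.range n, X k a / Real.Gamma (v + k + 1) * (s - a) ^ (v + (k : ℝ)))
      + (1 / Real.Gamma (v + n)) * J a (v + n) h s with hWdef
  have hpj : ∀ j : ℕ, j + 1 ≤ n → 0 < v + (n : ℝ) - j - 1 := by
    intro j hj
    have : (j : ℝ) + 1 ≤ n := by exact_mod_cast hj
    linarith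
  have hpj1 : ∀ j : ℕ, j + 1 ≤ n → v + (n : ℝ) - j - 1 ≠ 1 := by
    intro j hj he
    exact hvint ((2 : ℤ) + j - n) (by push_cast; linarith)
  have E : ∀ j, j ≤ n → ∀ s ∈ Icc c b, iteratedDerivWithin j W (Icc c b) s
      = (∑ k ∈ Finset.range n, X k a / Real.Gamma (v + k + 1)
          * (∏ i ∈ Finset.range j, (v + k - i)) * (s - a) ^ (v + k - j))
        + (1 / Real.Gamma (v + n - j)) * J a (v + n - j) h s := by
    intro j
    induction j with
    | zero =>
      intro _ s hs
      rw [iteratedDerivWithin_zero]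
      simp only [Finset.range_zero, Finset.prod_empty, mul_one, Nat.cast_zero, sub_zero, hWdef]
    | succ j ihE =>
      intro hj s hs
      have hjn : j ≤ n := le_trans (Nat.le_succ j) hj
      have hsa : a < s := lt_of_lt_of_le hac hs.1
      rw [iteratedDerivWithin_succ]
      rw [derivWithin_congr (fun u hu => ihE hjn u hu) (ihE hjn s hs)]
      -- derivative of the sum part
      have hsum : HasDerivAt (fun u =>
          ∑ k ∈ Finset.range n, X k a / Real.Gamma (v + k + 1)
            * (∏ i ∈ Finset.range j, (v + k - i)) * (u - a) ^ (v + k - j))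
          (∑ k ∈ Finset.range n, X k a / Real.Gamma (v + k + 1)
            * (∏ i ∈ Finset.range j, (v + k - i)) * ((v + k - j) * (s - a) ^ (v + k - j - 1)))
          s := by
        apply HasDerivAt.fun_sum
        intro k _
        have h1 : HasDerivAt (fun u : ℝ => u - a) 1 s := (hasDerivAt_id s).sub_const a
        have h2 := Real.hasDerivAt_rpow_const (x := s - a) (p := v + k - j)
          (Or.inl (ne_of_gt (by linarith)))
        have h3 := h2.comp s h1
        simp only [mul_one] at h3
        exact h3.const_mul _
      -- derivative of the J part
      have hJd : HasDerivAt (J a (v + (n : ℝ) - j) h)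
          ((v + (n : ℝ) - j - 1) * J a (v + (n : ℝ) - j - 1) h s) s := by
        have := hasDerivAt_J (p := v + (n : ℝ) - j - 1) (hpj j hj) (hpj1 j hj) hhc hM hsa
        have harg : v + (n : ℝ) - j - 1 + 1 = v + (n : ℝ) - j := by ring
        rwa [harg] at this
      have hD := hsum.fun_add ((hJd.const_mul (1 / Real.Gamma (v + (n : ℝ) - j))))
      rw [hD.hasDerivWithinAt.derivWithin (U'.uniqueDiffWithinAt hs)]
      have hcast1 : ((j + 1 : ℕ) : ℝ) = (j : ℝ) + 1 := by push_cast; ring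
      rw [hcast1]
      have harg2 : v + (n : ℝ) - ((j : ℝ) + 1) = v + (n : ℝ) - j - 1 := by ring
      rw [harg2]
      have hwne : v + (n : ℝ) - j - 1 ≠ 0 := ne_of_gt (hpj j hj)
      have hΓne : Real.Gamma (v + (n : ℝ) - j - 1) ≠ 0 :=
        ne_of_gt (Real.Gamma_pos_of_pos (hpj j hj))
      have hGam : Real.Gamma (v + (n : ℝ) - j) =
          (v + (n : ℝ) - j - 1) * Real.Gamma (v + (n : ℝ) - j - 1) := by
        have h1 : Real.Gamma (v + (n : ℝ) - j) = Real.Gamma ((v + (n : ℝ) - j - 1) + 1) := by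
          congr 1; ring
        rw [h1, Real.Gamma_add_one hwne]
      have hJcoef : 1 / Real.Gamma (v + (n:ℝ) - j)
            * ((v + (n:ℝ) - j - 1) * J a (v + (n:ℝ) - j - 1) h s)
          = 1 / Real.Gamma (v + (n:ℝ) - j - 1) * J a (v + (n:ℝ) - j - 1) h s := by
        rw [hGam]
        field_simp
      have hterm : ∀ k ∈ Finset.range n,
          X k a / Real.Gamma (v + k + 1) * (∏ i ∈ Finset.range j, (v + k - i))
            * ((v + k - j) * (s - a) ^ (v + k - j - 1))
          = X k a / Real.Gamma (v + k + 1) * (∏ i ∈ Finset.range (j + 1), (v + k - i))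
            * (s - a) ^ (v + k - ((j : ℝ) + 1)) := by
        intro k _
        rw [Finset.prod_range_succ]
        have : v + (k : ℝ) - ((j : ℝ) + 1) = v + k - j - 1 := by ring
        rw [this]
        ring
      rw [hJcoef, Finset.sum_congr rfl hterm]
  -- rewrite the Riemann-Liouville side
  have hLW : Set.EqOn (fun s => (1 / Real.Gamma v) * ∫ τ in a..s, (s - τ) ^ (v - 1) * x τ)
      W (Icc a b) := by
    intro s hs
    have hL2 := L2 n le_rfl s hs
    show (1 / Real.Gamma v) * J a v x s = W s
    rw [hL2, hJcongr ((v + (n : ℝ))) s hs, hWdef]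
    have hΓv : Real.Gamma v ≠ 0 := hΓpos v hv0
    have hΓvn : Real.Gamma (v + (n : ℝ)) ≠ 0 := hΓpos _ (by positivity)
    simp only
    rw [mul_add, ← mul_assoc, ← mul_assoc]
    rw [one_div, inv_mul_cancel₀ hΓv, one_mul]
    congr 1
    · exact Finset.sum_congr rfl (fun k _ => by ring)
    · field_simp
  have htmemab : t ∈ Icc a b := ⟨hat.le, htb⟩
  have htmemcb : t ∈ Icc c b := ⟨hct.le, htb⟩
  have hstep2 : iteratedDerivWithin n
      (fun s => (1 / Real.Gamma v) * ∫ τ in a..s, (s - τ) ^ (v - 1) * x τ) (Icc a b) t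
      = iteratedDerivWithin n W (Icc a b) t :=
    iteratedDerivWithin_congr hLW htmemab
  have hset : Icc a b =ᶠ[nhds t] Icc c b := by
    rw [Filter.eventuallyEq_set]
    filter_upwards [IsOpen.mem_nhds isOpen_Ioi hct] with s hs
    simp only [mem_Icc]
    have hs' : c < s := hs
    constructor
    · intro h'; exact ⟨le_of_lt hs', h'.2⟩
    · intro h'; exact ⟨by linarith, h'.2⟩
  have hstep3 : iteratedDerivWithin n W (Icc a b) t = iteratedDerivWithin n W (Icc c b) t :=
    iteratedDerivWithin_congr_set' n hset
  have hE := E n le_rfl t htmemcb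
  -- final computation
  show (1 / Real.Gamma v) * J a v (X n) t
      = iteratedDerivWithin n
          (fun s => (1 / Real.Gamma v) * ∫ τ in a..s, (s - τ) ^ (v - 1) * x τ) (Icc a b) t
        - ∑ k ∈ Finset.range n, X k a / Real.Gamma ((k : ℝ) - q + 1) * (t - a) ^ ((k : ℝ) - q)
  rw [hstep2, hstep3, hE, hJcongr v t htmemab]
  have hnn : v + (n : ℝ) - n = v := by ring
  rw [hnn]
  have hsum_eq : ∑ k ∈ Finset.range n, X k a / Real.Gamma (v + k + 1)
      * (∏ i ∈ Finset.range n, (v + k - i)) * (t - a) ^ (v + k - n)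
      = ∑ k ∈ Finset.range n, X k a / Real.Gamma ((k : ℝ) - q + 1) * (t - a) ^ ((k : ℝ) - q) := by
    refine Finset.sum_congr rfl (fun k _ => ?_)
    have hy : ∀ i : ℕ, v + (k : ℝ) - i ≠ 0 := by
      intro i he
      exact hvint ((i : ℤ) - k) (by push_cast; linarith)
    have hgp := gamma_prod (y := v + (k : ℝ)) hy n
    have hexp : v + (k : ℝ) - n = (k : ℝ) - q := by rw [hv]; ring
    have hkq : (k : ℝ) - q + 1 = v + (k : ℝ) + 1 - n := by rw [hv]; ring
    rw [hexp, hkq, hgp]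
    have hprod_ne : (∏ i ∈ Finset.range n, (v + (k : ℝ) - i)) ≠ 0 :=
      Finset.prod_ne_zero_iff.mpr (fun i _ => hy i)
    have hΓ2 : Real.Gamma (v + (k : ℝ) + 1 - n) ≠ 0 := by
      apply Real.Gamma_ne_zero
      intro m he
      exact hvint ((n : ℤ) - k - 1 - m) (by push_cast; linarith)
    field_simp
  rw [hsum_eq]
  ring
end

section
/- Let a < b be real numbers and let x : [a,b] → ℝ be continuously differentiable. Then for every t ∈ (a,b], the Riemann–Liouville fractional derivative of order q tends to the classical derivative as q → 1⁻: writing ⲟD_t^q x(t) for the derivative, evaluated at t, of the function s ↦ (1/Γ(1−q)) ∫_a^s (s−τ)^{−q} x(τ) dτ, one has lim_{q→1⁻} ⲟD_t^q x(t) = x′(t). -/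
open MeasureTheory Set Filter intervalIntegral
open scoped Topology Interval

/-- Change of variables identity for the Riemann–Liouville kernel integral. -/
private lemma rl_subst (a s q : ℝ) (has : a < s) (hq0 : 0 < q) (hq1 : q < 1) (x : ℝ → ℝ) :
    ∫ τ in a..s, (s - τ) ^ (-q) * x τ
      = ((s - a) ^ (1 - q) / (1 - q)) *
          ∫ w in Ioo (0:ℝ) 1, x (s - (s - a) * w ^ (1/(1-q))) := by
  have hp : 0 < 1 - q := by linarith
  have hsa : 0 < s - a := sub_pos.2 has
  set φ : ℝ → ℝ := fun w => s - (s - a) * w ^ (1/(1-q)) with hφ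
  set φd : ℝ → ℝ := fun w => -((s - a) * (1/(1-q) * w ^ (1/(1-q) - 1))) with hφd
  have hφ' : ∀ w ∈ Ioo (0:ℝ) 1, HasDerivWithinAt φ (φd w) (Ioo 0 1) w := by
    intro w hw
    have h := Real.hasDerivAt_rpow_const (x := w) (p := 1/(1-q)) (Or.inl hw.1.ne')
    exact ((h.const_mul (s - a)).const_sub s).hasDerivWithinAt
  have hinj : InjOn φ (Ioo 0 1) := by
    have hanti : StrictAntiOn φ (Ioo (0:ℝ) 1) := by
      intro w1 h1 w2 h2 h12
      have : w1 ^ (1/(1-q)) < w2 ^ (1/(1-q)) :=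
        Real.rpow_lt_rpow h1.1.le h12 (by positivity)
      simp only [hφ]
      nlinarith
    exact hanti.injOn
  have himg : φ '' Ioo 0 1 = Ioo a s := by
    apply Subset.antisymm
    · rintro τ ⟨w, hw, rfl⟩
      have h1 : 0 < w ^ (1/(1-q)) := Real.rpow_pos_of_pos hw.1 _
      have h2 : w ^ (1/(1-q)) < 1 := Real.rpow_lt_one hw.1.le hw.2 (by positivity)
      constructor
      · simp only [hφ]; nlinarith
      · simp only [hφ]; nlinarith
    · rintro τ ⟨h1, h2⟩
      have hsτ : 0 < s - τ := sub_pos.2 h2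
      refine ⟨((s - τ)/(s - a)) ^ (1-q), ⟨by positivity, ?_⟩, ?_⟩
      · exact Real.rpow_lt_one (by positivity) (by rw [div_lt_one hsa]; linarith) hp
      · have hb : (0:ℝ) ≤ (s - τ)/(s - a) := by positivity
        have : (((s - τ)/(s-a)) ^ (1-q)) ^ (1/(1-q)) = (s - τ)/(s - a) := by
          rw [← Real.rpow_mul hb, mul_one_div_cancel hp.ne', Real.rpow_one]
        simp only [hφ, this]
        field_simp
        ring
  have key := integral_image_eq_integral_abs_deriv_smul measurableSet_Ioo hφ' hinj
      (fun τ => (s - τ) ^ (-q) * x τ)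
  rw [himg] at key
  rw [intervalIntegral.integral_of_le has.le, integral_Ioc_eq_integral_Ioo, key,
    ← MeasureTheory.integral_const_mul]
  refine setIntegral_congr_fun measurableSet_Ioo fun w hw => ?_
  have hw0 : (0:ℝ) < w := hw.1
  have hwp : 0 < w ^ (1/(1-q) - 1) := Real.rpow_pos_of_pos hw0 _
  have habs : |φd w| = (s - a) * (1/(1-q) * w ^ (1/(1-q) - 1)) := by
    rw [hφd, abs_neg, abs_of_pos (by positivity)]
  have harg : s - φ w = (s - a) * w ^ (1/(1-q)) := by simp only [hφ]; ring
  have e1 : w ^ (1/(1-q) - 1) * w ^ (1/(1-q) * -q) = 1 := by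
    rw [← Real.rpow_add hw0, show 1/(1-q) - 1 + 1/(1-q) * -q = 0 by field_simp; ring,
      Real.rpow_zero]
  have e2 : (s - a) * (s - a) ^ (-q) = (s - a) ^ (1 - q) := by
    rw [show (1:ℝ) - q = 1 + -q by ring, Real.rpow_add hsa, Real.rpow_one]
  rw [smul_eq_mul, habs, harg,
    Real.mul_rpow hsa.le (Real.rpow_nonneg hw0.le _), ← Real.rpow_mul hw0.le]
  linear_combination (x (φ w) / (1-q) * ((s-a) * (s-a) ^ (-q))) * e1
    + (x (φ w) / (1-q)) * e2

set_option maxHeartbeats 1000000 in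
private lemma rl_deriv (a b t q : ℝ) (hab : a < b) (hta : a < t) (htb : t ≤ b)
    (hq0 : 0 < q) (hq1 : q < 1) (g x : ℝ → ℝ) (hg : Continuous g)
    (hx : ∀ y, HasDerivAt x (g y) y) :
    derivWithin (fun s => (1 / Real.Gamma (1 - q)) * ∫ τ in a..s, (s - τ) ^ (-q) * x τ)
        (Icc a b) t
      = (1 / Real.Gamma (1 - q)) *
          ((t - a) ^ (-q) * (∫ w in Ioo (0:ℝ) 1, x (t - (t - a) * w ^ (1/(1-q)))) +
           ((t - a) ^ (1 - q) / (1 - q)) *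
             ∫ w in Ioo (0:ℝ) 1, (1 - w ^ (1/(1-q))) * g (t - (t - a) * w ^ (1/(1-q)))) := by
  have hp : 0 < 1 - q := by linarith
  have hxc : Continuous x := by
    rw [continuous_iff_continuousAt]; exact fun y => (hx y).continuousAt
  set e : ℝ := 1/(1-q) with he
  have hepos : 0 < e := by positivity
  -- boundedness data
  set R : ℝ := |a| + 2*|t| + 2 with hR
  obtain ⟨M, hM⟩ := (isCompact_Icc (a := -R) (b := R)).exists_bound_of_continuousOn
    hg.continuousOn
  have harg : ∀ s ∈ Metric.ball t 1, ∀ θ : ℝ, 0 ≤ θ → θ ≤ 1 →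
      s - (s - a) * θ ∈ Icc (-R) R := by
    intro s hs θ hθ0 hθ1
    have hst : |s - t| < 1 := by simpa [Real.dist_eq] using hs
    have h1 := abs_lt.1 hst
    have h2 := neg_abs_le a
    have h3 := le_abs_self a
    have h4 := neg_abs_le t
    have h5 := le_abs_self t
    constructor
    · simp only [hR]; nlinarith
    · simp only [hR]; nlinarith
  have hwe_mem : ∀ w ∈ Ι (0:ℝ) 1, 0 ≤ w ^ e ∧ w ^ e ≤ 1 := by
    rw [Set.uIoc_of_le zero_le_one]
    exact fun w hw => ⟨Real.rpow_nonneg hw.1.le _,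
      Real.rpow_le_one hw.1.le hw.2 hepos.le⟩
  -- continuity of w ↦ w ^ e on [0, 1]
  have hrpowCO : ContinuousOn (fun w : ℝ => w ^ e) (Icc (0:ℝ) 1) := by
    intro w hw
    exact (Real.continuousAt_rpow_const w e
      (by rcases eq_or_ne w 0 with h | h
          · exact Or.inr hepos.le
          · exact Or.inl h)).continuousWithinAt
  have hrpowIoc : ContinuousOn (fun w : ℝ => w ^ e) (Ι (0:ℝ) 1) := by
    rw [Set.uIoc_of_le zero_le_one]
    exact hrpowCO.mono Ioc_subset_Icc_self
  -- the parametric integral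
  set Φ : ℝ → ℝ := fun s => ∫ w in (0:ℝ)..1, x (s - (s - a) * w ^ e) with hΦdef
  have hΦ : HasDerivAt Φ
      (∫ w in (0:ℝ)..1, (1 - w ^ e) * g (t - (t - a) * w ^ e)) t := by
    have hmeas : ∀ᶠ s in 𝓝 t, AEStronglyMeasurable
        (fun w : ℝ => x (s - (s - a) * w ^ e)) (volume.restrict (Ι (0:ℝ) 1)) := by
      refine Eventually.of_forall fun s => ?_
      exact ((hxc.comp_continuousOn
        (continuousOn_const.sub (continuousOn_const.mul hrpowIoc)))).aestronglyMeasurable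
        measurableSet_uIoc
    have hint : IntervalIntegrable (fun w : ℝ => x (t - (t - a) * w ^ e)) volume 0 1 := by
      apply ContinuousOn.intervalIntegrable
      rw [Set.uIcc_of_le zero_le_one]
      exact hxc.comp_continuousOn
        (continuousOn_const.sub (continuousOn_const.mul hrpowCO))
    have h'meas : AEStronglyMeasurable
        (fun w : ℝ => (1 - w ^ e) * g (t - (t - a) * w ^ e))
        (volume.restrict (Ι (0:ℝ) 1)) := by
      exact ((continuousOn_const.sub hrpowIoc).mul
        (hg.comp_continuousOn
          (continuousOn_const.sub (continuousOn_const.mul hrpowIoc)))).aestronglyMeasurable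
        measurableSet_uIoc
    have hbound : ∀ᵐ w ∂(volume : Measure ℝ), w ∈ Ι (0:ℝ) 1 →
        ∀ s ∈ Metric.ball t 1, ‖(1 - w ^ e) * g (s - (s - a) * w ^ e)‖ ≤ M := by
      refine Eventually.of_forall fun w hw s hs => ?_
      obtain ⟨h0, h1⟩ := hwe_mem w hw
      have hmem := harg s hs _ h0 h1
      have hb1 : ‖(1:ℝ) - w ^ e‖ ≤ 1 := by rw [Real.norm_eq_abs, abs_le]; constructor <;> linarith
      calc ‖(1 - w ^ e) * g (s - (s - a) * w ^ e)‖
          = ‖(1:ℝ) - w ^ e‖ * ‖g (s - (s - a) * w ^ e)‖ := norm_mul _ _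
        _ ≤ 1 * M := mul_le_mul hb1 (hM _ hmem) (norm_nonneg _) zero_le_one
        _ = M := one_mul M
    have hdiff : ∀ᵐ w ∂(volume : Measure ℝ), w ∈ Ι (0:ℝ) 1 →
        ∀ s ∈ Metric.ball t 1, HasDerivAt (fun s => x (s - (s - a) * w ^ e))
          ((1 - w ^ e) * g (s - (s - a) * w ^ e)) s := by
      refine Eventually.of_forall fun w _ s _ => ?_
      have hi : HasDerivAt (fun s => s - (s - a) * w ^ e) (1 - w ^ e) s := by
        exact ((hasDerivAt_id' s).sub (((hasDerivAt_id' s).sub_const a).mul_const (w ^ e))).congr_deriv (by ring)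
      have := (hx (s - (s - a) * w ^ e)).comp s hi
      exact this.congr_deriv (mul_comm _ _)
    exact (intervalIntegral.hasDerivAt_integral_of_dominated_loc_of_deriv_le
      (F := fun s w => x (s - (s - a) * w ^ e))
      (F' := fun s w => (1 - w ^ e) * g (s - (s - a) * w ^ e))
      (Metric.ball_mem_nhds t one_pos) hmeas hint h'meas hbound (intervalIntegrable_const) hdiff).2
  -- derivative of the power factor
  have hA : HasDerivAt (fun s : ℝ => (s - a) ^ (1-q) / (1-q)) ((t - a) ^ (-q)) t := by
    have h0 : HasDerivAt (fun s : ℝ => s - a) 1 t := (hasDerivAt_id t).sub_const a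
    have h1 : HasDerivAt (fun y : ℝ => y ^ (1-q)) ((1-q) * (t-a) ^ (1-q-1)) (t-a) :=
      Real.hasDerivAt_rpow_const (Or.inl (sub_pos.2 hta).ne')
    have h2 := (h1.comp t h0).div_const (1-q)
    refine h2.congr_deriv ?_
    rw [mul_one, show (1:ℝ)-q-1 = -q by ring, mul_div_cancel_left₀ _ hp.ne']
  have hG : HasDerivAt
      (fun s => (1 / Real.Gamma (1 - q)) * (((s - a) ^ (1-q) / (1-q)) * Φ s))
      ((1 / Real.Gamma (1 - q)) * ((t - a) ^ (-q) * Φ t +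
        ((t - a) ^ (1-q) / (1-q)) *
          ∫ w in (0:ℝ)..1, (1 - w ^ e) * g (t - (t - a) * w ^ e)) ) t :=
    (hA.mul hΦ).const_mul _
  -- germ equality on Icc a b near t
  have hEqOn : ∀ s ∈ Ioi a,
      (1 / Real.Gamma (1 - q)) * (((s - a) ^ (1-q) / (1-q)) * Φ s)
        = (1 / Real.Gamma (1 - q)) * ∫ τ in a..s, (s - τ) ^ (-q) * x τ := by
    intro s hs
    simp only [hΦdef]
    rw [rl_subst a s q hs hq0 hq1 x, intervalIntegral.integral_of_le zero_le_one,
      integral_Ioc_eq_integral_Ioo]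
  have hEv : (fun s => (1 / Real.Gamma (1 - q)) * ∫ τ in a..s, (s - τ) ^ (-q) * x τ)
      =ᶠ[𝓝[Icc a b] t]
      (fun s => (1 / Real.Gamma (1 - q)) * (((s - a) ^ (1-q) / (1-q)) * Φ s)) := by
    filter_upwards [mem_nhdsWithin_of_mem_nhds (isOpen_Ioi.mem_nhds hta)] with s hs
    exact (hEqOn s hs).symm
  have hF : HasDerivWithinAt
      (fun s => (1 / Real.Gamma (1 - q)) * ∫ τ in a..s, (s - τ) ^ (-q) * x τ)
      ((1 / Real.Gamma (1 - q)) * ((t - a) ^ (-q) * Φ t +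
        ((t - a) ^ (1-q) / (1-q)) *
          ∫ w in (0:ℝ)..1, (1 - w ^ e) * g (t - (t - a) * w ^ e)))
      (Icc a b) t :=
    hG.hasDerivWithinAt.congr_of_eventuallyEq hEv (hEqOn t hta).symm
  rw [hF.derivWithin (uniqueDiffOn_Icc hab t ⟨hta.le, htb⟩)]
  simp only [hΦdef]
  rw [intervalIntegral.integral_of_le zero_le_one, integral_Ioc_eq_integral_Ioo,
    intervalIntegral.integral_of_le (zero_le_one (α := ℝ)), integral_Ioc_eq_integral_Ioo]

set_option maxHeartbeats 1000000 in
private lemma rl_key (a b t : ℝ) (hab : a < b) (hta : a < t) (htb : t ≤ b)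
    (g x : ℝ → ℝ) (hg : Continuous g) (hx : ∀ y, HasDerivAt x (g y) y) :
    Filter.Tendsto (fun q : ℝ =>
        derivWithin (fun s => (1 / Real.Gamma (1 - q)) * ∫ τ in a..s, (s - τ) ^ (-q) * x τ)
          (Set.Icc a b) t) (𝓝[<] (1:ℝ)) (𝓝 (g t)) := by
  have hxc : Continuous x := by
    rw [continuous_iff_continuousAt]; exact fun y => (hx y).continuousAt
  have hta' : 0 < t - a := sub_pos.2 hta
  set l : Filter ℝ := 𝓝[<] (1:ℝ) with hl
  set Φ₁ : ℝ → ℝ := fun q => ∫ w in Ioo (0:ℝ) 1, x (t - (t - a) * w ^ (1/(1-q))) with hΦ₁def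
  set Φ₂ : ℝ → ℝ := fun q => ∫ w in Ioo (0:ℝ) 1,
      (1 - w ^ (1/(1-q))) * g (t - (t - a) * w ^ (1/(1-q))) with hΦ₂def
  -- pointwise limit of the inner exponent
  have hwe : ∀ w ∈ Ioo (0:ℝ) 1, Tendsto (fun q : ℝ => w ^ (1/(1-q))) l (𝓝 0) := by
    intro w hw
    have h1 : Tendsto (fun q : ℝ => 1 - q) l (𝓝[>] 0) := by
      apply tendsto_nhdsWithin_of_tendsto_nhds_of_eventually_within
      · exact ((continuous_const.sub continuous_id).tendsto' 1 0 (by norm_num)).mono_left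
          nhdsWithin_le_nhds
      · exact eventually_mem_nhdsWithin.mono fun q hq => Set.mem_Ioi.2 (sub_pos.2 hq)
    have h2 : Tendsto (fun q : ℝ => 1/(1 - q)) l atTop := by
      simpa [one_div, Function.comp_def] using tendsto_inv_nhdsGT_zero.comp h1
    have h3 : Tendsto (fun y : ℝ => w ^ y) atTop (𝓝 0) :=
      tendsto_rpow_atTop_of_base_lt_one w (by linarith [hw.1]) hw.2
    exact h3.comp h2
  obtain ⟨M₁, hM₁⟩ := (isCompact_Icc (a := a) (b := t)).exists_bound_of_continuousOn
    hxc.continuousOn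
  obtain ⟨M₂, hM₂⟩ := (isCompact_Icc (a := a) (b := t)).exists_bound_of_continuousOn
    hg.continuousOn
  have hargmem : ∀ c : ℝ, 0 ≤ c → c ≤ 1 → t - (t - a) * c ∈ Icc a t := by
    intro c h0 h1; constructor <;> nlinarith
  have hae : ∀ᵐ w ∂(volume.restrict (Ioo (0:ℝ) 1)), w ∈ Ioo (0:ℝ) 1 :=
    ae_restrict_mem measurableSet_Ioo
  have hco : ∀ q : ℝ, ContinuousOn (fun w : ℝ => w ^ (1/(1-q))) (Ioo (0:ℝ) 1) :=
    fun q w hw => (Real.continuousAt_rpow_const w _ (Or.inl hw.1.ne')).continuousWithinAt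
  have hmemIoo : ∀ q ∈ Iio (1:ℝ), ∀ w ∈ Ioo (0:ℝ) 1,
      (0:ℝ) ≤ w ^ (1/(1-q)) ∧ w ^ (1/(1-q)) ≤ 1 := by
    intro q hq w hw
    have hp : 0 < 1 - q := sub_pos.2 hq
    exact ⟨Real.rpow_nonneg hw.1.le _, Real.rpow_le_one hw.1.le hw.2.le (by positivity)⟩
  have hbound_int : ∀ M : ℝ, Integrable (fun _ : ℝ => M) (volume.restrict (Ioo (0:ℝ) 1)) :=
    fun M => integrableOn_const measure_Ioo_lt_top.ne
  have hargT : ∀ w ∈ Ioo (0:ℝ) 1,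
      Tendsto (fun q : ℝ => t - (t - a) * w ^ (1/(1-q))) l (𝓝 t) := by
    intro w hw
    have h : Tendsto (fun q : ℝ => t - (t - a) * w ^ (1/(1-q))) l (𝓝 (t - (t - a) * 0)) :=
      tendsto_const_nhds.sub (tendsto_const_nhds.mul (hwe w hw))
    simpa using h
  have hΦ₁T : Tendsto Φ₁ l (𝓝 (x t)) := by
    have h : Tendsto Φ₁ l (𝓝 (∫ _ in Ioo (0:ℝ) 1, x t)) := by
      refine tendsto_integral_filter_of_dominated_convergence (fun _ => M₁) ?_ ?_ (hbound_int M₁) ?_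
      · exact eventually_mem_nhdsWithin.mono fun q _ =>
          ((hxc.comp_continuousOn
            (continuousOn_const.sub (continuousOn_const.mul (hco q)))).aestronglyMeasurable
            measurableSet_Ioo)
      · refine eventually_mem_nhdsWithin.mono fun q hq => hae.mono fun w hw => ?_
        obtain ⟨h0, h1⟩ := hmemIoo q hq w hw
        exact hM₁ _ (hargmem _ h0 h1)
      · exact hae.mono fun w hw => hxc.continuousAt.tendsto.comp (hargT w hw)
    have : (∫ _ in Ioo (0:ℝ) 1, x t) = x t := by
      simp [Real.volume_Ioo]
    rwa [this] at h
  have hΦ₂T : Tendsto Φ₂ l (𝓝 (g t)) := by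
    have h : Tendsto Φ₂ l (𝓝 (∫ _ in Ioo (0:ℝ) 1, g t)) := by
      refine tendsto_integral_filter_of_dominated_convergence (fun _ => M₂) ?_ ?_ (hbound_int M₂) ?_
      · refine eventually_mem_nhdsWithin.mono fun q _ => ?_
        exact ((continuousOn_const.sub (hco q)).mul
          (hg.comp_continuousOn
            (continuousOn_const.sub (continuousOn_const.mul (hco q))))).aestronglyMeasurable
          measurableSet_Ioo
      · refine eventually_mem_nhdsWithin.mono fun q hq => hae.mono fun w hw => ?_
        obtain ⟨h0, h1⟩ := hmemIoo q hq w hw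
        have hb1 : ‖(1:ℝ) - w ^ (1/(1-q))‖ ≤ 1 := by
          rw [Real.norm_eq_abs, abs_le]; constructor <;> linarith
        calc ‖(1 - w ^ (1/(1-q))) * g (t - (t - a) * w ^ (1/(1-q)))‖
            = ‖(1:ℝ) - w ^ (1/(1-q))‖ * ‖g (t - (t - a) * w ^ (1/(1-q)))‖ := norm_mul _ _
          _ ≤ 1 * M₂ := mul_le_mul hb1 (hM₂ _ (hargmem _ h0 h1)) (norm_nonneg _) zero_le_one
          _ = M₂ := one_mul M₂
      · refine hae.mono fun w hw => ?_
        have h2 : Tendsto (fun q : ℝ => g (t - (t - a) * w ^ (1/(1-q)))) l (𝓝 (g t)) :=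
          hg.continuousAt.tendsto.comp (hargT w hw)
        have h1 : Tendsto (fun q : ℝ => 1 - w ^ (1/(1-q))) l (𝓝 1) := by
          simpa using tendsto_const_nhds.sub (hwe w hw)
        simpa using h1.mul h2
    have : (∫ _ in Ioo (0:ℝ) 1, g t) = g t := by
      simp [Real.volume_Ioo]
    rwa [this] at h
  -- scalar limits
  have hΓ : Tendsto (fun q : ℝ => Real.Gamma (2 - q)) l (𝓝 1) := by
    have hc : ContinuousAt Real.Gamma 1 :=
      (Real.differentiableAt_Gamma (fun m => by
        have hm : (0:ℝ) ≤ m := Nat.cast_nonneg m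
        intro h; linarith)).continuousAt
    have h2 : Tendsto (fun q : ℝ => 2 - q) l (𝓝 1) := by
      exact ((continuous_const.sub continuous_id).tendsto' 1 1 (by norm_num)).mono_left
        nhdsWithin_le_nhds
    have := hc.tendsto.comp h2
    rw [Real.Gamma_one] at this
    exact this
  have hcontrp : Continuous (fun y : ℝ => (t - a) ^ y) := by
    have h : (fun y : ℝ => (t - a) ^ y) = fun y => Real.exp (Real.log (t - a) * y) := by
      funext y; rw [Real.rpow_def_of_pos hta']
    rw [h]; exact Real.continuous_exp.comp (continuous_const.mul continuous_id)
  have hr1 : Tendsto (fun q : ℝ => (t - a) ^ (-q)) l (𝓝 ((t - a) ^ (-1:ℝ))) := by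
    have := (hcontrp.tendsto (-1:ℝ)).comp (continuous_neg.tendsto (1:ℝ))
    exact this.mono_left nhdsWithin_le_nhds
  have hr0 : Tendsto (fun q : ℝ => (t - a) ^ (1 - q)) l (𝓝 1) := by
    have h0 : Tendsto (fun q : ℝ => 1 - q) (𝓝 (1:ℝ)) (𝓝 0) :=
      (continuous_const.sub continuous_id).tendsto' 1 0 (by norm_num)
    have h2 : Tendsto (fun q : ℝ => (t - a) ^ (1 - q)) l (𝓝 ((t - a) ^ (0:ℝ))) :=
      (hcontrp.tendsto 0).comp (h0.mono_left nhdsWithin_le_nhds)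
    simpa [Real.rpow_zero] using h2
  have h1q : Tendsto (fun q : ℝ => 1 - q) l (𝓝 0) :=
    ((continuous_const.sub continuous_id).tendsto' 1 0 (by norm_num)).mono_left
      nhdsWithin_le_nhds
  -- eventual formula
  have hq0ev : ∀ᶠ q in l, q ∈ Ioi (0:ℝ) :=
    mem_nhdsWithin_of_mem_nhds (isOpen_Ioi.mem_nhds (Set.mem_Ioi.mpr one_pos))
  have hq1ev : ∀ᶠ q in l, q ∈ Iio (1:ℝ) := eventually_mem_nhdsWithin
  have hEv : ∀ᶠ q in l,
      ((1 - q) * ((t - a) ^ (-q) * Φ₁ q) + (t - a) ^ (1-q) * Φ₂ q) / Real.Gamma (2 - q)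
        = derivWithin (fun s => (1 / Real.Gamma (1 - q)) * ∫ τ in a..s, (s - τ) ^ (-q) * x τ)
            (Set.Icc a b) t := by
    filter_upwards [hq0ev, hq1ev] with q h0 h1
    rw [rl_deriv a b t q hab hta htb h0 h1 g x hg hx]
    have hp : 0 < 1 - q := sub_pos.2 h1
    have hΓp : 0 < Real.Gamma (1 - q) := Real.Gamma_pos_of_pos hp
    have hΓ2 : Real.Gamma (2 - q) = (1 - q) * Real.Gamma (1 - q) := by
      rw [show (2:ℝ) - q = (1 - q) + 1 by ring, Real.Gamma_add_one hp.ne']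
    rw [hΓ2, hΦ₁def, hΦ₂def]
    field_simp
  refine Tendsto.congr' hEv ?_
  have hnum : Tendsto (fun q : ℝ => (1 - q) * ((t - a) ^ (-q) * Φ₁ q) + (t - a) ^ (1-q) * Φ₂ q)
      l (𝓝 (0 * ((t - a) ^ (-1:ℝ) * x t) + 1 * g t)) :=
    (h1q.mul (hr1.mul hΦ₁T)).add (hr0.mul hΦ₂T)
  have := hnum.div hΓ one_ne_zero
  simp at this
  exact this

/-- **The Riemann–Liouville fractional derivative tends to the classical derivative
as the order `q` tends to `1⁻`.** If `x` is continuously differentiable on `[a, b]`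
with `a < b`, then for every `t ∈ (a, b]`, writing `ⲟD_t^q x(t)` for the derivative
at `t` of `s ↦ (1/Γ(1-q)) ∫_a^s (s-τ)^(-q) x(τ) dτ`, one has
`lim_{q → 1⁻} ⲟD_t^q x(t) = x'(t)`. -/
theorem riemannLiouville_tendsto_deriv_of_order_tendsto_one
    (a b : ℝ) (hab : a < b) (x : ℝ → ℝ) (hx : ContDiffOn ℝ 1 x (Set.Icc a b))
    (t : ℝ) (ht : t ∈ Set.Ioc a b) :
    Filter.Tendsto
      (fun q : ℝ =>
        derivWithin
          (fun s => (1 / Real.Gamma (1 - q)) * ∫ τ in a..s, (s - τ) ^ (-q) * x τ)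
          (Set.Icc a b) t)
      (nhdsWithin 1 (Set.Iio 1))
      (nhds (derivWithin x (Set.Icc a b) t)) := by
  obtain ⟨hta, htb⟩ := ht
  have hUD : UniqueDiffOn ℝ (Icc a b) := uniqueDiffOn_Icc hab
  have hgcont : ContinuousOn (fun y => derivWithin x (Icc a b) y) (Icc a b) :=
    hx.continuousOn_derivWithin hUD le_rfl
  set g : ℝ → ℝ := fun s => derivWithin x (Icc a b) (Set.projIcc a b hab.le s) with hgdef
  have hgc : Continuous g := by
    apply hgcont.comp_continuous (continuous_subtype_val.comp continuous_projIcc)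
    exact fun s => (Set.projIcc a b hab.le s).2
  have hgeq : ∀ y ∈ Icc a b, g y = derivWithin x (Icc a b) y := fun y hy => by
    rw [hgdef]; simp [Set.projIcc_of_mem hab.le hy]
  set X : ℝ → ℝ := fun s => x a + ∫ u in a..s, g u with hXdef
  have hX' : ∀ y, HasDerivAt X (g y) y := by
    intro y
    have h := (hgc.integral_hasStrictDerivAt a y).hasDerivAt
    exact h.const_add (x a)
  have hXeq : EqOn x X (Icc a b) := by
    intro s hs
    have hdiff : ∀ y ∈ Ioo a s, HasDerivAt x (g y) y := by
      intro y hy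
      have hyI : y ∈ Ioo a b := ⟨hy.1, lt_of_lt_of_le hy.2 hs.2⟩
      have h1 : HasDerivWithinAt x (derivWithin x (Icc a b) y) (Icc a b) y :=
        ((hx.differentiableOn one_ne_zero) y ⟨hyI.1.le, hyI.2.le⟩).hasDerivWithinAt
      have h2 := h1.hasDerivAt (Icc_mem_nhds hyI.1 hyI.2)
      rw [hgeq y ⟨hyI.1.le, hyI.2.le⟩]
      exact h2
    have hcont : ContinuousOn x (Icc a s) := hx.continuousOn.mono (Icc_subset_Icc le_rfl hs.2)
    have hint : IntervalIntegrable g volume a s := hgc.intervalIntegrable _ _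
    have hFTC := intervalIntegral.integral_eq_sub_of_hasDeriv_right_of_le hs.1 hcont
      (fun y hy => (hdiff y hy).hasDerivWithinAt) hint
    rw [hXdef]; simp only; rw [hFTC]; ring
  have hFun : ∀ q : ℝ, EqOn
      (fun s => (1 / Real.Gamma (1 - q)) * ∫ τ in a..s, (s - τ) ^ (-q) * x τ)
      (fun s => (1 / Real.Gamma (1 - q)) * ∫ τ in a..s, (s - τ) ^ (-q) * X τ) (Icc a b) := by
    intro q s hs
    simp only
    congr 1
    apply intervalIntegral.integral_congr
    intro τ hτ
    have hτ' : τ ∈ Icc a b := by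
      rw [Set.uIcc_of_le hs.1] at hτ; exact ⟨hτ.1, le_trans hτ.2 hs.2⟩
    simp only
    rw [hXeq hτ']
  have htI : t ∈ Icc a b := ⟨hta.le, htb⟩
  have hconv := rl_key a b t hab hta htb g X hgc hX'
  rw [show derivWithin x (Icc a b) t = g t from (hgeq t htI).symm]
  refine hconv.congr fun q => ?_
  exact derivWithin_congr (hFun q).symm ((hFun q htI)).symm
end

section
/- Fix t₀ < t_f, dimensions n, m, a nonempty compact set U ⊆ ℝ^m, a continuous map f̃ : ℝ × ℝⁿ × ℝ^m → ℝⁿ, an integer r ≥ 1, orders v₁, …, v_r > 0, continuous functions g₁, …, g_r : ℝ × ℝⁿ × ℝ^m → ℝ, and a continuous terminal cost h : ℝⁿ → ℝ. Then the value function V satisfies Bellman's principle of optimality: for all t ∈ [t₀, t_f], s ∈ [t, t_f], and x₀ ∈ ℝⁿ, V(t, x₀) = inf over admissible pairs (x, u) from (t, x₀) of [ Σ_{j=1}^r (1/Γ(v_j)) ∫_t^s (t_f − τ)^{v_j−1} g_j(τ, x(τ), u(τ)) dτ + V(s, x(s)) ], where both infima are taken in the extended real numbers. -/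
open MeasureTheory Set

noncomputable section
set_option linter.unusedSectionVars false
set_option linter.unusedVariables false

section Helpers

lemma aemeasurable_of_measurable_restrict' {β : Type*} [MeasurableSpace β]
    {s : Set ℝ} (hs : MeasurableSet s) {u : ℝ → β} (h : Measurable (s.restrict u)) :
    AEMeasurable u (volume.restrict s) :=
  (aemeasurable_restrict_iff_comap_subtype hs).mpr h.aemeasurable

lemma integral_congr_ae_ne {E : Type*} [NormedAddCommGroup E] [NormedSpace ℝ E]
    {F G : ℝ → E} {c d s : ℝ} (hne : ∀ σ ∈ uIoc c d, σ ≠ s → F σ = G σ) :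
    ∫ σ in c..d, F σ = ∫ σ in c..d, G σ := by
  apply intervalIntegral.integral_congr_ae
  have hae : ∀ᵐ σ : ℝ ∂volume, σ ≠ s := by
    rw [ae_iff]
    have : {σ : ℝ | ¬ σ ≠ s} = {s} := by ext σ; simp
    rw [this]
    exact measure_singleton s
  filter_upwards [hae] with σ hσ hmem
  exact hne σ hmem hσ

lemma EReal.coe_add_neg_add (a : ℝ) (x : EReal) :
    (a : EReal) + (((-a : ℝ) : EReal) + x) = x := by
  induction x using EReal.rec with
  | bot => simp
  | coe b => norm_cast; ring
  | top =>
    rw [EReal.add_top_of_ne_bot (by simp), EReal.add_top_of_ne_bot (by simp)]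

lemma EReal.coe_add_iInf {ι : Sort*} (a : ℝ) (f : ι → EReal) :
    (a : EReal) + ⨅ i, f i = ⨅ i, ((a : EReal) + f i) := by
  refine le_antisymm (le_iInf fun i => add_le_add le_rfl (iInf_le f i)) ?_
  have h : ((-a : ℝ) : EReal) + ⨅ i, ((a : EReal) + f i) ≤ ⨅ i, f i := by
    refine le_iInf fun i => ?_
    calc ((-a : ℝ) : EReal) + ⨅ j, ((a : EReal) + f j)
        ≤ ((-a : ℝ) : EReal) + ((a : EReal) + f i) :=
          add_le_add le_rfl (iInf_le _ i)
      _ = f i := by simpa using EReal.coe_add_neg_add (-a) (f i)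
  calc (⨅ i, ((a : EReal) + f i))
      = (a : EReal) + (((-a : ℝ) : EReal) + ⨅ i, ((a : EReal) + f i)) :=
        (EReal.coe_add_neg_add a _).symm
    _ ≤ (a : EReal) + ⨅ i, f i := add_le_add le_rfl h

end Helpers

section Comp

variable {n m : ℕ} {G : Type*} [NormedAddCommGroup G] [MeasurableSpace G] [BorelSpace G]
  [SecondCountableTopology G] [TopologicalSpace.PseudoMetrizableSpace G]
  {a b : ℝ} {U : Set (EuclideanSpace ℝ (Fin m))}
  {x : ℝ → EuclideanSpace ℝ (Fin n)} {u : ℝ → EuclideanSpace ℝ (Fin m)}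
  {Φ : ℝ × EuclideanSpace ℝ (Fin n) × EuclideanSpace ℝ (Fin m) → G}

lemma aemeasurable_comp_pair (hx : ContinuousOn x (Icc a b))
    (humeas : Measurable ((Icc a b).restrict u)) (hΦ : Continuous Φ) :
    AEMeasurable (fun τ => Φ (τ, x τ, u τ)) (volume.restrict (Icc a b)) := by
  have hxm : AEMeasurable x (volume.restrict (Icc a b)) := hx.aemeasurable measurableSet_Icc
  have hum' := aemeasurable_of_measurable_restrict' measurableSet_Icc humeas
  exact hΦ.measurable.comp_aemeasurable (aemeasurable_id.prodMk (hxm.prodMk hum'))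

lemma exists_bound_comp (hUc : IsCompact U) (hx : ContinuousOn x (Icc a b))
    (hum : ∀ τ ∈ Icc a b, u τ ∈ U) (hΦ : Continuous Φ) :
    ∃ C, ∀ τ ∈ Icc a b, ‖Φ (τ, x τ, u τ)‖ ≤ C := by
  have hK : IsCompact (x '' Icc a b) := isCompact_Icc.image_of_continuousOn hx
  have hS : IsCompact ((Icc a b) ×ˢ ((x '' Icc a b) ×ˢ U)) := isCompact_Icc.prod (hK.prod hUc)
  obtain ⟨C, hC⟩ := hS.exists_bound_of_continuousOn hΦ.continuousOn
  exact ⟨C, fun τ hτ => hC _ ⟨hτ, ⟨mem_image_of_mem _ hτ, hum τ hτ⟩⟩⟩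

lemma integrableOn_comp (hUc : IsCompact U) (hx : ContinuousOn x (Icc a b))
    (hum : ∀ τ ∈ Icc a b, u τ ∈ U) (humeas : Measurable ((Icc a b).restrict u))
    (hΦ : Continuous Φ) :
    IntegrableOn (fun τ => Φ (τ, x τ, u τ)) (Icc a b) volume := by
  obtain ⟨C, hC⟩ := exists_bound_comp hUc hx hum hΦ
  exact ⟨(aemeasurable_comp_pair hx humeas hΦ).aestronglyMeasurable,
    HasFiniteIntegral.restrict_of_bounded (C := C) measure_Icc_lt_top
      ((ae_restrict_iff' measurableSet_Icc).2 (ae_of_all _ hC))⟩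

lemma intervalIntegrable_comp (hUc : IsCompact U) (hx : ContinuousOn x (Icc a b))
    (hum : ∀ τ ∈ Icc a b, u τ ∈ U) (humeas : Measurable ((Icc a b).restrict u))
    (hΦ : Continuous Φ) {c d : ℝ} (hac : a ≤ c) (hcd : c ≤ d) (hdb : d ≤ b) :
    IntervalIntegrable (fun τ => Φ (τ, x τ, u τ)) volume c d :=
  (intervalIntegrable_iff_integrableOn_Ioc_of_le hcd).mpr
    ((integrableOn_comp hUc hx hum humeas hΦ).mono_set
      (Ioc_subset_Icc_self.trans (Icc_subset_Icc hac hdb)))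

lemma intervalIntegrable_kernel (tf p : ℝ) (hp : -1 < p) (c d : ℝ) :
    IntervalIntegrable (fun τ : ℝ => (tf - τ) ^ p) volume c d := by
  have h := (intervalIntegral.intervalIntegrable_rpow'
    (a := tf - c) (b := tf - d) hp).comp_sub_left tf
  simpa using h

lemma intervalIntegrable_kernel_mul
    {Φr : ℝ × EuclideanSpace ℝ (Fin n) × EuclideanSpace ℝ (Fin m) → ℝ}
    (hUc : IsCompact U) (hx : ContinuousOn x (Icc a b))
    (hum : ∀ τ ∈ Icc a b, u τ ∈ U) (humeas : Measurable ((Icc a b).restrict u))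
    (hΦ : Continuous Φr) {tf p c d : ℝ} (hp : -1 < p)
    (hac : a ≤ c) (hcd : c ≤ d) (hdb : d ≤ b) :
    IntervalIntegrable (fun τ => (tf - τ) ^ p * Φr (τ, x τ, u τ)) volume c d := by
  obtain ⟨C, hC⟩ := exists_bound_comp (x := x) (u := u) hUc hx hum hΦ
  rw [intervalIntegrable_iff_integrableOn_Ioc_of_le hcd]
  have hker : IntegrableOn (fun τ : ℝ => (tf - τ) ^ p) (Ioc c d) volume :=
    (intervalIntegrable_iff_integrableOn_Ioc_of_le hcd).mp
      (intervalIntegrable_kernel tf p hp c d)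
  have hsub : Ioc c d ⊆ Icc a b := Ioc_subset_Icc_self.trans (Icc_subset_Icc hac hdb)
  have haesm : AEStronglyMeasurable (fun τ => Φr (τ, x τ, u τ)) (volume.restrict (Ioc c d)) :=
    ((aemeasurable_comp_pair hx humeas hΦ).aestronglyMeasurable).mono_measure
      (Measure.restrict_mono hsub le_rfl)
  have hbd : ∀ᵐ τ ∂(volume.restrict (Ioc c d)), ‖Φr (τ, x τ, u τ)‖ ≤ C :=
    (ae_restrict_iff' measurableSet_Ioc).2 (ae_of_all _ fun τ hτ => hC τ (hsub hτ))
  have := hker.bdd_mul haesm hbd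
  simpa [mul_comm, IntegrableOn] using this

end Comp

/-- An **admissible pair** `(x, u)` from `(t, x₀)` for the controlled dynamics
`ẋ = f̃(τ, x, u)` on `[t, t_f]`: `u` is a measurable control taking values in the
control set `U`, and `x` is a continuous trajectory satisfying the integral form of
the dynamics, `x(τ) = x₀ + ∫_t^τ f̃(σ, x(σ), u(σ)) dσ` for all `τ ∈ [t, t_f]`. -/
structure AdmissiblePair (tf : ℝ) {n m : ℕ} (U : Set (EuclideanSpace ℝ (Fin m)))
    (ftil : ℝ → EuclideanSpace ℝ (Fin n) → EuclideanSpace ℝ (Fin m) →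
      EuclideanSpace ℝ (Fin n))
    (t : ℝ) (x0 : EuclideanSpace ℝ (Fin n)) where
  x : ℝ → EuclideanSpace ℝ (Fin n)
  u : ℝ → EuclideanSpace ℝ (Fin m)
  u_mem : ∀ τ ∈ Icc t tf, u τ ∈ U
  u_meas : Measurable ((Icc t tf).restrict u)
  x_cont : ContinuousOn x (Icc t tf)
  x_eq : ∀ τ ∈ Icc t tf, x τ = x0 + ∫ σ in t..τ, ftil σ (x σ) (u σ)

section Pairs

variable {tf : ℝ} {n m : ℕ} {U : Set (EuclideanSpace ℝ (Fin m))}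
  {ftil : ℝ → EuclideanSpace ℝ (Fin n) → EuclideanSpace ℝ (Fin m) →
    EuclideanSpace ℝ (Fin n)}
  {t s : ℝ} {x0 : EuclideanSpace ℝ (Fin n)}

lemma AdmissiblePair.dyn_intervalIntegrable (p : AdmissiblePair tf U ftil t x0)
    (hUc : IsCompact U)
    (hftil : Continuous fun z : ℝ × EuclideanSpace ℝ (Fin n) × EuclideanSpace ℝ (Fin m) =>
      ftil z.1 z.2.1 z.2.2)
    {c d : ℝ} (hac : t ≤ c) (hcd : c ≤ d) (hdb : d ≤ tf) :
    IntervalIntegrable (fun σ => ftil σ (p.x σ) (p.u σ)) volume c d :=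
  intervalIntegrable_comp hUc p.x_cont p.u_mem p.u_meas hftil hac hcd hdb

/-- Restriction of an admissible pair to a later starting time. -/
def AdmissiblePair.restrict (p : AdmissiblePair tf U ftil t x0)
    (hUc : IsCompact U)
    (hftil : Continuous fun z : ℝ × EuclideanSpace ℝ (Fin n) × EuclideanSpace ℝ (Fin m) =>
      ftil z.1 z.2.1 z.2.2)
    (hs : s ∈ Icc t tf) : AdmissiblePair tf U ftil s (p.x s) where
  x := p.x
  u := p.u
  u_mem τ hτ := p.u_mem τ ⟨hs.1.trans hτ.1, hτ.2⟩
  u_meas := by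
    have hmap : Measurable fun τ : (Icc s tf : Set ℝ) =>
        (⟨τ.1, Icc_subset_Icc hs.1 le_rfl τ.2⟩ : (Icc t tf : Set ℝ)) :=
      measurable_subtype_coe.subtype_mk
    exact p.u_meas.comp hmap
  x_cont := p.x_cont.mono (Icc_subset_Icc hs.1 le_rfl)
  x_eq τ hτ := by
    have h1 := p.x_eq τ ⟨hs.1.trans hτ.1, hτ.2⟩
    have h2 := p.x_eq s hs
    have hsplit := intervalIntegral.integral_add_adjacent_intervals
      (p.dyn_intervalIntegrable hUc hftil le_rfl hs.1 hs.2)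
      (p.dyn_intervalIntegrable hUc hftil hs.1 hτ.1 hτ.2)
    calc p.x τ = x0 + ∫ σ in t..τ, ftil σ (p.x σ) (p.u σ) := h1
      _ = x0 + ((∫ σ in t..s, ftil σ (p.x σ) (p.u σ)) +
          ∫ σ in s..τ, ftil σ (p.x σ) (p.u σ)) := by rw [hsplit]
      _ = (x0 + ∫ σ in t..s, ftil σ (p.x σ) (p.u σ)) +
          ∫ σ in s..τ, ftil σ (p.x σ) (p.u σ)  := by rw [add_assoc]
      _ = p.x s + ∫ σ in s..τ, ftil σ (p.x σ) (p.u σ) := by rw [← h2]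

@[simp] lemma AdmissiblePair.restrict_x (p : AdmissiblePair tf U ftil t x0)
    (hUc) (hftil) (hs : s ∈ Icc t tf) : (p.restrict hUc hftil hs).x = p.x := rfl

@[simp] lemma AdmissiblePair.restrict_u (p : AdmissiblePair tf U ftil t x0)
    (hUc) (hftil) (hs : s ∈ Icc t tf) : (p.restrict hUc hftil hs).u = p.u := rfl

variable (p : AdmissiblePair tf U ftil t x0) (q : AdmissiblePair tf U ftil s (p.x s))

lemma concat_qs (hs : s ∈ Icc t tf) : q.x s = p.x s := by
  simpa using q.x_eq s ⟨le_rfl, hs.2⟩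

lemma concat_x_le (hs : s ∈ Icc t tf) {σ : ℝ} (hσ : σ ≤ s) :
    p.x (min σ s) + q.x (max σ s) - p.x s = p.x σ := by
  rw [min_eq_left hσ, max_eq_right hσ, concat_qs p q hs, add_sub_cancel_right]

lemma concat_x_ge {σ : ℝ} (hσ : s ≤ σ) :
    p.x (min σ s) + q.x (max σ s) - p.x s = q.x σ := by
  rw [min_eq_right hσ, max_eq_left hσ, add_sub_cancel_left]

lemma concat_u_lt {σ : ℝ} (hσ : σ < s) :
    (if σ < s then p.u σ else q.u (max s (min σ tf))) = p.u σ := if_pos hσ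

lemma concat_u_ge {σ : ℝ} (hσ1 : s ≤ σ) (hσ2 : σ ≤ tf) :
    (if σ < s then p.u σ else q.u (max s (min σ tf))) = q.u σ := by
  rw [if_neg (not_lt.2 hσ1), min_eq_left hσ2, max_eq_right hσ1]

lemma concat_x_cont (hs : s ∈ Icc t tf) :
    ContinuousOn (fun τ => p.x (min τ s) + q.x (max τ s) - p.x s) (Icc t tf) := by
  have h1 : ContinuousOn (fun τ => p.x (min τ s)) (Icc t tf) := by
    apply p.x_cont.comp (continuous_id.min continuous_const).continuousOn
    intro τ hτ
    exact ⟨le_min hτ.1 hs.1, min_le_of_left_le hτ.2⟩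
  have h2 : ContinuousOn (fun τ => q.x (max τ s)) (Icc t tf) := by
    apply q.x_cont.comp (continuous_id.max continuous_const).continuousOn
    intro τ hτ
    exact ⟨le_max_right _ _, max_le hτ.2 hs.2⟩
  exact (h1.add h2).sub continuousOn_const

lemma concat_u_mem (hs : s ∈ Icc t tf) :
    ∀ τ ∈ Icc t tf, (if τ < s then p.u τ else q.u (max s (min τ tf))) ∈ U := by
  intro τ hτ
  by_cases hlt : τ < s
  · rw [if_pos hlt]; exact p.u_mem τ hτ
  · push_neg at hlt
    rw [concat_u_ge p q hlt hτ.2]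
    exact q.u_mem τ ⟨hlt, hτ.2⟩

lemma concat_u_meas (hs : s ∈ Icc t tf) :
    Measurable ((Icc t tf).restrict
      fun τ => if τ < s then p.u τ else q.u (max s (min τ tf))) := by
  have hset : MeasurableSet {τ : (Icc t tf : Set ℝ) | (τ : ℝ) < s} :=
    measurableSet_lt measurable_subtype_coe measurable_const
  have h1 : Measurable fun τ : (Icc t tf : Set ℝ) => p.u τ := p.u_meas
  have hmap : Measurable fun τ : (Icc t tf : Set ℝ) =>
      (⟨max s (min (τ : ℝ) tf), ⟨le_max_left _ _, max_le hs.2 (min_le_right _ _)⟩⟩ :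
        (Icc s tf : Set ℝ)) :=
    (measurable_const.max (measurable_subtype_coe.min measurable_const)).subtype_mk
  have h2 : Measurable fun τ : (Icc t tf : Set ℝ) => q.u (max s (min (τ : ℝ) tf)) :=
    q.u_meas.comp hmap
  exact Measurable.ite hset h1 h2

lemma concat_x_eq (hUc : IsCompact U)
    (hftil : Continuous fun z : ℝ × EuclideanSpace ℝ (Fin n) × EuclideanSpace ℝ (Fin m) =>
      ftil z.1 z.2.1 z.2.2)
    (hs : s ∈ Icc t tf) :
    ∀ τ ∈ Icc t tf,
      p.x (min τ s) + q.x (max τ s) - p.x s = x0 + ∫ σ in t..τ,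
        ftil σ (p.x (min σ s) + q.x (max σ s) - p.x s)
          (if σ < s then p.u σ else q.u (max s (min σ tf))) := by
  intro τ hτ
  have hInt : ∀ c d, t ≤ c → c ≤ d → d ≤ tf →
      IntervalIntegrable (fun σ => ftil σ (p.x (min σ s) + q.x (max σ s) - p.x s)
        (if σ < s then p.u σ else q.u (max s (min σ tf)))) volume c d :=
    fun c d h1 h2 h3 => intervalIntegrable_comp hUc (concat_x_cont p q hs)
      (concat_u_mem p q hs) (concat_u_meas p q hs) hftil h1 h2 h3
  rcases le_or_gt τ s with hcase | hcase
  · rw [concat_x_le p q hs hcase, p.x_eq τ ⟨hτ.1, hcase.trans hs.2⟩]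
    congr 1
    refine (integral_congr_ae_ne (s := s) fun σ hσ hne => ?_).symm
    rw [uIoc_of_le hτ.1] at hσ
    have hlt : σ < s := lt_of_le_of_ne (hσ.2.trans hcase) hne
    rw [concat_x_le p q hs hlt.le, concat_u_lt p q hlt]
  · have hsτ : s ≤ τ := hcase.le
    rw [concat_x_ge p q hsτ, q.x_eq τ ⟨hsτ, hτ.2⟩,
      ← intervalIntegral.integral_add_adjacent_intervals
        (hInt t s le_rfl hs.1 hs.2) (hInt s τ hs.1 hsτ hτ.2)]
    have e1 : (∫ σ in t..s, ftil σ (p.x (min σ s) + q.x (max σ s) - p.x s)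
        (if σ < s then p.u σ else q.u (max s (min σ tf)))) =
        ∫ σ in t..s, ftil σ (p.x σ) (p.u σ) := by
      refine integral_congr_ae_ne (s := s) fun σ hσ hne => ?_
      rw [uIoc_of_le hs.1] at hσ
      have hlt : σ < s := lt_of_le_of_ne hσ.2 hne
      rw [concat_x_le p q hs hlt.le, concat_u_lt p q hlt]
    have e2 : (∫ σ in s..τ, ftil σ (p.x (min σ s) + q.x (max σ s) - p.x s)
        (if σ < s then p.u σ else q.u (max s (min σ tf)))) =
        ∫ σ in s..τ, ftil σ (q.x σ) (q.u σ) := by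
      refine intervalIntegral.integral_congr fun σ hσ => ?_
      rw [uIcc_of_le hsτ] at hσ
      rw [concat_x_ge p q hσ.1, concat_u_ge p q hσ.1 (hσ.2.trans hτ.2)]
    rw [e1, e2, ← add_assoc, ← p.x_eq s hs]

/-- Concatenation of admissible pairs. -/
def AdmissiblePair.concat (hUc : IsCompact U)
    (hftil : Continuous fun z : ℝ × EuclideanSpace ℝ (Fin n) × EuclideanSpace ℝ (Fin m) =>
      ftil z.1 z.2.1 z.2.2)
    (hs : s ∈ Icc t tf) : AdmissiblePair tf U ftil t x0 where
  x := fun τ => p.x (min τ s) + q.x (max τ s) - p.x s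
  u := fun τ => if τ < s then p.u τ else q.u (max s (min τ tf))
  u_mem := concat_u_mem p q hs
  u_meas := concat_u_meas p q hs
  x_cont := concat_x_cont p q hs
  x_eq := concat_x_eq p q hUc hftil hs

@[simp] lemma AdmissiblePair.concat_x_def (hUc) (hftil) (hs : s ∈ Icc t tf) :
    (p.concat q hUc hftil hs).x = fun τ => p.x (min τ s) + q.x (max τ s) - p.x s := rfl

@[simp] lemma AdmissiblePair.concat_u_def (hUc) (hftil) (hs : s ∈ Icc t tf) :
    (p.concat q hUc hftil hs).u = fun τ => if τ < s then p.u τ else q.u (max s (min τ tf)) :=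
  rfl

end Pairs

/-- The **generalized (fractional-order) performance index** of an admissible pair:
`J(t, x₀; x, u) = Σ_j (1/Γ(v_j)) ∫_t^{t_f} (t_f - τ)^(v_j - 1) g_j(τ, x(τ), u(τ)) dτ
  + h(x(t_f))`, with kernels anchored at the fixed final time `t_f`. -/
def fracCost (tf : ℝ) {n m : ℕ} {U : Set (EuclideanSpace ℝ (Fin m))}
    {ftil : ℝ → EuclideanSpace ℝ (Fin n) → EuclideanSpace ℝ (Fin m) →
      EuclideanSpace ℝ (Fin n)}
    {r : ℕ} (v : Fin r → ℝ)
    (g : Fin r → ℝ → EuclideanSpace ℝ (Fin n) → EuclideanSpace ℝ (Fin m) → ℝ)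
    (h : EuclideanSpace ℝ (Fin n) → ℝ)
    {t : ℝ} {x0 : EuclideanSpace ℝ (Fin n)} (p : AdmissiblePair tf U ftil t x0) : ℝ :=
  (∑ j, (1 / Real.Gamma (v j)) *
      ∫ τ in t..tf, (tf - τ) ^ (v j - 1) * g j τ (p.x τ) (p.u τ)) + h (p.x tf)

/-- The **value function**: the infimum, in the extended reals, of the generalized
performance index over all admissible pairs from `(t, x₀)`. -/
def fracValue (tf : ℝ) {n m : ℕ} (U : Set (EuclideanSpace ℝ (Fin m)))
    (ftil : ℝ → EuclideanSpace ℝ (Fin n) → EuclideanSpace ℝ (Fin m) →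
      EuclideanSpace ℝ (Fin n))
    {r : ℕ} (v : Fin r → ℝ)
    (g : Fin r → ℝ → EuclideanSpace ℝ (Fin n) → EuclideanSpace ℝ (Fin m) → ℝ)
    (h : EuclideanSpace ℝ (Fin n) → ℝ)
    (t : ℝ) (x0 : EuclideanSpace ℝ (Fin n)) : EReal :=
  ⨅ p : AdmissiblePair tf U ftil t x0, ((fracCost tf v g h p : ℝ) : EReal)

section Cost

variable {tf : ℝ} {n m : ℕ} {U : Set (EuclideanSpace ℝ (Fin m))}
  {ftil : ℝ → EuclideanSpace ℝ (Fin n) → EuclideanSpace ℝ (Fin m) →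
    EuclideanSpace ℝ (Fin n)}
  {t s : ℝ} {x0 : EuclideanSpace ℝ (Fin n)} {r : ℕ}

variable (hUc : IsCompact U)
  (hftil : Continuous fun z : ℝ × EuclideanSpace ℝ (Fin n) × EuclideanSpace ℝ (Fin m) =>
    ftil z.1 z.2.1 z.2.2)
  {v : Fin r → ℝ} (hv : ∀ j, 0 < v j)
  {g : Fin r → ℝ → EuclideanSpace ℝ (Fin n) → EuclideanSpace ℝ (Fin m) → ℝ}
  (hg : ∀ j, Continuous fun z : ℝ × EuclideanSpace ℝ (Fin n) × EuclideanSpace ℝ (Fin m) =>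
    g j z.1 z.2.1 z.2.2)
  (h : EuclideanSpace ℝ (Fin n) → ℝ)
  (hs : s ∈ Icc t tf)

include hUc hftil hv hg hs in
lemma fracCost_split (p : AdmissiblePair tf U ftil t x0) :
    fracCost tf v g h p =
      (∑ j, (1 / Real.Gamma (v j)) *
          ∫ τ in t..s, (tf - τ) ^ (v j - 1) * g j τ (p.x τ) (p.u τ))
        + fracCost tf v g h (p.restrict hUc hftil hs) := by
  have hII : ∀ (j : Fin r) (c d : ℝ), t ≤ c → c ≤ d → d ≤ tf →
      IntervalIntegrable (fun τ => (tf - τ) ^ (v j - 1) * g j τ (p.x τ) (p.u τ)) volume c d :=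
    fun j c d h1 h2 h3 => intervalIntegrable_kernel_mul hUc p.x_cont p.u_mem p.u_meas (hg j)
      (by linarith [hv j]) h1 h2 h3
  unfold fracCost
  simp only [AdmissiblePair.restrict_x, AdmissiblePair.restrict_u]
  rw [← add_assoc, ← Finset.sum_add_distrib]
  congr 1
  refine Finset.sum_congr rfl fun j _ => ?_
  rw [← mul_add, intervalIntegral.integral_add_adjacent_intervals
    (hII j t s le_rfl hs.1 hs.2) (hII j s tf hs.1 hs.2 le_rfl)]

include hUc hftil hv hg hs in
lemma fracCost_concat (p : AdmissiblePair tf U ftil t x0)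
    (q : AdmissiblePair tf U ftil s (p.x s)) :
    fracCost tf v g h (p.concat q hUc hftil hs) =
      (∑ j, (1 / Real.Gamma (v j)) *
          ∫ τ in t..s, (tf - τ) ^ (v j - 1) * g j τ (p.x τ) (p.u τ))
        + fracCost tf v g h q := by
  have hII : ∀ (j : Fin r) (c d : ℝ), t ≤ c → c ≤ d → d ≤ tf →
      IntervalIntegrable (fun τ => (tf - τ) ^ (v j - 1) *
        g j τ (p.x (min τ s) + q.x (max τ s) - p.x s)
          (if τ < s then p.u τ else q.u (max s (min τ tf)))) volume c d :=
    fun j c d h1 h2 h3 => intervalIntegrable_kernel_mul hUc (concat_x_cont p q hs)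
      (concat_u_mem p q hs) (concat_u_meas p q hs) (hg j) (by linarith [hv j]) h1 h2 h3
  have key : ∀ j : Fin r,
      (∫ τ in t..tf, (tf - τ) ^ (v j - 1) *
        g j τ (p.x (min τ s) + q.x (max τ s) - p.x s)
          (if τ < s then p.u τ else q.u (max s (min τ tf)))) =
      (∫ τ in t..s, (tf - τ) ^ (v j - 1) * g j τ (p.x τ) (p.u τ)) +
        ∫ τ in s..tf, (tf - τ) ^ (v j - 1) * g j τ (q.x τ) (q.u τ) := by
    intro j
    rw [← intervalIntegral.integral_add_adjacent_intervals
      (hII j t s le_rfl hs.1 hs.2) (hII j s tf hs.1 hs.2 le_rfl)]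
    congr 1
    · refine integral_congr_ae_ne (s := s) fun σ hσ hne => ?_
      rw [uIoc_of_le hs.1] at hσ
      have hlt : σ < s := lt_of_le_of_ne hσ.2 hne
      rw [concat_x_le p q hs hlt.le, concat_u_lt p q hlt]
    · refine intervalIntegral.integral_congr fun σ hσ => ?_
      rw [uIcc_of_le hs.2] at hσ
      rw [concat_x_ge p q hσ.1, concat_u_ge p q hσ.1 hσ.2]
  unfold fracCost
  simp only [AdmissiblePair.concat_x_def, AdmissiblePair.concat_u_def]
  rw [concat_x_ge p q hs.2]
  have hsum : (∑ j, (1 / Real.Gamma (v j)) *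
        ∫ τ in t..tf, (tf - τ) ^ (v j - 1) *
          g j τ (p.x (min τ s) + q.x (max τ s) - p.x s)
            (if τ < s then p.u τ else q.u (max s (min τ tf)))) =
      ∑ j, ((1 / Real.Gamma (v j)) *
          (∫ τ in t..s, (tf - τ) ^ (v j - 1) * g j τ (p.x τ) (p.u τ)) +
        (1 / Real.Gamma (v j)) *
          ∫ τ in s..tf, (tf - τ) ^ (v j - 1) * g j τ (q.x τ) (q.u τ)) :=
    Finset.sum_congr rfl fun j _ => by rw [key j, mul_add]
  rw [hsum, Finset.sum_add_distrib, add_assoc]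

end Cost

/-- **Bellman's principle of optimality** for the generalized fractional-order
performance index: for `t ∈ [t₀, t_f]`, `s ∈ [t, t_f]` and any initial state `x₀`,
the value function satisfies
`V(t, x₀) = inf over admissible pairs (x, u) from (t, x₀) of
  [ Σ_j (1/Γ(v_j)) ∫_t^s (t_f - τ)^(v_j-1) g_j(τ, x(τ), u(τ)) dτ + V(s, x(s)) ]`,
both infima taken in the extended reals. -/
theorem fracValue_principle_of_optimality
    (t0 tf : ℝ) (ht0f : t0 < tf) (n m : ℕ)
    (U : Set (EuclideanSpace ℝ (Fin m))) (hUc : IsCompact U) (hUne : U.Nonempty)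
    (ftil : ℝ → EuclideanSpace ℝ (Fin n) → EuclideanSpace ℝ (Fin m) →
      EuclideanSpace ℝ (Fin n))
    (hftil : Continuous fun p : ℝ × EuclideanSpace ℝ (Fin n) × EuclideanSpace ℝ (Fin m) =>
      ftil p.1 p.2.1 p.2.2)
    (r : ℕ) (hr : 1 ≤ r) (v : Fin r → ℝ) (hv : ∀ j, 0 < v j)
    (g : Fin r → ℝ → EuclideanSpace ℝ (Fin n) → EuclideanSpace ℝ (Fin m) → ℝ)
    (hg : ∀ j, Continuous fun p : ℝ × EuclideanSpace ℝ (Fin n) × EuclideanSpace ℝ (Fin m) =>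
      g j p.1 p.2.1 p.2.2)
    (h : EuclideanSpace ℝ (Fin n) → ℝ) (hh : Continuous h)
    (t : ℝ) (ht : t ∈ Set.Icc t0 tf) (s : ℝ) (hs : s ∈ Set.Icc t tf)
    (x0 : EuclideanSpace ℝ (Fin n)) :
    fracValue tf U ftil v g h t x0 =
      ⨅ p : AdmissiblePair tf U ftil t x0,
        (((∑ j, (1 / Real.Gamma (v j)) *
              ∫ τ in t..s, (tf - τ) ^ (v j - 1) * g j τ (p.x τ) (p.u τ) : ℝ) : EReal)
          + fracValue tf U ftil v g h s (p.x s)) := by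
  have hs' : s ∈ Icc t tf := hs
  unfold fracValue
  refine le_antisymm (le_iInf fun p => ?_) (le_iInf fun p => ?_)
  · rw [EReal.coe_add_iInf]
    refine le_iInf fun q => ?_
    have hle : (⨅ p' : AdmissiblePair tf U ftil t x0,
        ((fracCost tf v g h p' : ℝ) : EReal)) ≤
        ((fracCost tf v g h (p.concat q hUc hftil hs') : ℝ) : EReal) := iInf_le _ _
    rw [fracCost_concat hUc hftil hv hg h hs' p q, EReal.coe_add] at hle
    exact hle
  · refine (iInf_le _ p).trans ?_
    have h2 : (⨅ q : AdmissiblePair tf U ftil s (p.x s),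
        ((fracCost tf v g h q : ℝ) : EReal)) ≤
        ((fracCost tf v g h (p.restrict hUc hftil hs') : ℝ) : EReal) := iInf_le _ _
    calc ((∑ j, (1 / Real.Gamma (v j)) *
            ∫ τ in t..s, (tf - τ) ^ (v j - 1) * g j τ (p.x τ) (p.u τ) : ℝ) : EReal)
          + ⨅ q : AdmissiblePair tf U ftil s (p.x s), ((fracCost tf v g h q : ℝ) : EReal)
        ≤ ((∑ j, (1 / Real.Gamma (v j)) *
            ∫ τ in t..s, (tf - τ) ^ (v j - 1) * g j τ (p.x τ) (p.u τ) : ℝ) : EReal)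
          + ((fracCost tf v g h (p.restrict hUc hftil hs') : ℝ) : EReal) :=
          add_le_add le_rfl h2
      _ = (((∑ j, (1 / Real.Gamma (v j)) *
            ∫ τ in t..s, (tf - τ) ^ (v j - 1) * g j τ (p.x τ) (p.u τ))
          + fracCost tf v g h (p.restrict hUc hftil hs') : ℝ) : EReal) := by
          rw [EReal.coe_add]
      _ = ((fracCost tf v g h p : ℝ) : EReal) := by
          rw [← fracCost_split hUc hftil hv hg h hs' p]
end
end

section
/- Fix t₀ < t_f, dimensions n, m, a nonempty compact set U ⊆ ℝ^m, a continuous map f̃ : ℝ × ℝⁿ × ℝ^m → ℝⁿ, an integer r ≥ 1, orders v₁, …, v_r > 0, continuous functions g₁, …, g_r : ℝ × ℝⁿ × ℝ^m → ℝ, and a continuous terminal cost h : ℝⁿ → ℝ. Assume the value function V is real-valued and differentiable at a point (t, x) with t ∈ [t₀, t_f) and x ∈ ℝⁿ. Let ω ∈ U be such that there exists an admissible pair (x(·), u(·)) from (t, x) with u right-continuous at t, u(t) = ω. Then the following subsolution inequality holds: ∂V/∂t (t, x) + Σ_{j=1}^r (1/Γ(v_j)) (t_f − t)^{v_j−1}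 g_j(t, x, ω) + ⟨∇_x V(t, x), f̃(t, x, ω)⟩ ≥ 0. -/
open MeasureTheory Set

noncomputable section

namespace FracAux

variable {n m : ℕ}

local notation "En" => EuclideanSpace ℝ (Fin n)
local notation "Em" => EuclideanSpace ℝ (Fin m)

lemma intervalIntegrable_congr_ae {E : Type*} [NormedAddCommGroup E] {f g : ℝ → E} {a b : ℝ}
    (hfg : ∀ᵐ σ ∂(volume : Measure ℝ), σ ∈ Set.uIoc a b → f σ = g σ)
    (hf : IntervalIntegrable f volume a b) : IntervalIntegrable g volume a b := by
  rw [intervalIntegrable_iff] at hf ⊢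
  exact hf.congr ((ae_restrict_iff' measurableSet_uIoc).2 hfg)

lemma II_comp {β : Type*} [NormedAddCommGroup β] [MeasurableSpace β] [BorelSpace β] [SecondCountableTopology β]
    {U : Set Em} (hUc : IsCompact U)
    {F : ℝ → En → Em → β}
    (hF : Continuous fun p : ℝ × En × Em => F p.1 p.2.1 p.2.2)
    {xg : ℝ → En} {ug : ℝ → Em}
    (hxg : Continuous xg) (hug : Measurable ug) (hmem : ∀ τ, ug τ ∈ U)
    (a b : ℝ) : IntervalIntegrable (fun σ => F σ (xg σ) (ug σ)) volume a b := by
  have hmeas : Measurable fun σ => F σ (xg σ) (ug σ) :=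
    hF.measurable.comp (measurable_id.prodMk (hxg.measurable.prodMk hug))
  have hK : IsCompact ((uIcc a b) ×ˢ ((xg '' uIcc a b) ×ˢ U)) :=
    isCompact_uIcc.prod ((isCompact_uIcc.image hxg).prod hUc)
  obtain ⟨C, hC⟩ := hK.exists_bound_of_continuousOn hF.continuousOn
  rw [intervalIntegrable_iff]
  have hfin : volume (Set.uIoc a b) < ⊤ := by
    rw [Set.uIoc]; exact measure_Ioc_lt_top
  refine Integrable.mono' (g := fun _ : ℝ => C) (integrableOn_const hfin.ne) hmeas.aestronglyMeasurable ?_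
  refine (ae_restrict_iff' measurableSet_uIoc).2 (ae_of_all _ fun σ hσ => ?_)
  have hσ' : σ ∈ uIcc a b := uIoc_subset_uIcc hσ
  exact hC (σ, xg σ, ug σ) ⟨hσ', ⟨mem_image_of_mem _ hσ', hmem σ⟩⟩

lemma II_kernel_comp {U : Set Em} (hUc : IsCompact U)
    {g1 : ℝ → En → Em → ℝ}
    (hg1 : Continuous fun p : ℝ × En × Em => g1 p.1 p.2.1 p.2.2)
    {r : ℝ} (hr : -1 < r)
    {xg : ℝ → En} {ug : ℝ → Em}
    (hxg : Continuous xg) (hug : Measurable ug) (hmem : ∀ τ, ug τ ∈ U)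
    (tf a b : ℝ) :
    IntervalIntegrable (fun σ => (tf - σ) ^ r * g1 σ (xg σ) (ug σ)) volume a b := by
  have hker : IntervalIntegrable (fun σ => (tf - σ) ^ r) volume a b := by
    have h2 := (intervalIntegral.intervalIntegrable_rpow' (a := tf - a) (b := tf - b) hr).comp_sub_left tf
    simpa using h2
  have hmeasφ : Measurable fun σ => g1 σ (xg σ) (ug σ) :=
    hg1.measurable.comp (measurable_id.prodMk (hxg.measurable.prodMk hug))
  have hK : IsCompact ((uIcc a b) ×ˢ ((xg '' uIcc a b) ×ˢ U)) :=
    isCompact_uIcc.prod ((isCompact_uIcc.image hxg).prod hUc)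
  obtain ⟨C, hC⟩ := hK.exists_bound_of_continuousOn hg1.continuousOn
  rw [intervalIntegrable_iff] at hker ⊢
  refine Integrable.mono' ((hker.norm).const_mul C) ?_ ?_
  · exact (((measurable_const.sub measurable_id).pow measurable_const).mul hmeasφ).aestronglyMeasurable
  · refine (ae_restrict_iff' measurableSet_uIoc).2 (ae_of_all _ fun σ hσ => ?_)
    have hσ' : σ ∈ uIcc a b := uIoc_subset_uIcc hσ
    have hb := hC (σ, xg σ, ug σ) ⟨hσ', ⟨mem_image_of_mem _ hσ', hmem σ⟩⟩
    have h0 : (0:ℝ) ≤ C := le_trans (norm_nonneg _) hb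
    calc ‖(tf - σ) ^ r * g1 σ (xg σ) (ug σ)‖
        = ‖(tf - σ) ^ r‖ * ‖g1 σ (xg σ) (ug σ)‖ := norm_mul _ _
      _ ≤ ‖(tf - σ) ^ r‖ * C := by
          exact mul_le_mul_of_nonneg_left hb (norm_nonneg _)
      _ = C * ‖(tf - σ) ^ r‖ := mul_comm _ _

lemma exists_rep {U : Set Em}
    {ftil : ℝ → En → Em → En} {tf t : ℝ} {x0 : En}
    (p : AdmissiblePair tf U ftil t x0) (htf : t ≤ tf)
    {ω0 : Em} (hω0 : ω0 ∈ U) :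
    ∃ xg ug, Continuous xg ∧ Measurable ug ∧ (∀ τ, ug τ ∈ U) ∧
      (∀ τ ∈ Icc t tf, xg τ = p.x τ) ∧ (∀ τ ∈ Icc t tf, ug τ = p.u τ) := by
  classical
  refine ⟨IccExtend htf ((Icc t tf).restrict p.x),
    fun τ => if h : τ ∈ Icc t tf then p.u τ else ω0, ?_, ?_, ?_, ?_, ?_⟩
  · exact (p.x_cont.restrict).Icc_extend'
  · exact Measurable.dite p.u_meas measurable_const measurableSet_Icc
  · intro τ; by_cases hτ : τ ∈ Icc t tf <;> simp [hτ, p.u_mem τ, hω0]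
  · intro τ hτ; rw [IccExtend_of_mem htf _ hτ]; rfl
  · intro τ hτ; simp [hτ]

end FracAux

open intervalIntegral in
open Topology Filter in
open RealInnerProductSpace in
/-- **Subsolution inequality for the fractional HJB equation.** Assume the value
function is real-valued (equal to `V`) on `[t₀, t_f] × ℝⁿ` and differentiable at a
point `(t, x)` with `t ∈ [t₀, t_f)`. If `ω ∈ U` is such that there exists an
admissible pair from `(t, x)` whose control is right-continuous at `t` with value
`ω` there, then
`∂V/∂t (t,x) + Σ_j (1/Γ(v_j)) (t_f - t)^(v_j-1) g_j(t,x,ω) + ⟨∇ₓV(t,x), f̃(t,x,ω)⟩ ≥ 0`. -/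
theorem fracHJB_subsolution_inequality
    (t0 tf : ℝ) (ht0f : t0 < tf) (n m : ℕ)
    (U : Set (EuclideanSpace ℝ (Fin m))) (hUc : IsCompact U) (hUne : U.Nonempty)
    (ftil : ℝ → EuclideanSpace ℝ (Fin n) → EuclideanSpace ℝ (Fin m) →
      EuclideanSpace ℝ (Fin n))
    (hftil : Continuous fun p : ℝ × EuclideanSpace ℝ (Fin n) × EuclideanSpace ℝ (Fin m) =>
      ftil p.1 p.2.1 p.2.2)
    (r : ℕ) (hr : 1 ≤ r) (v : Fin r → ℝ) (hv : ∀ j, 0 < v j)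
    (g : Fin r → ℝ → EuclideanSpace ℝ (Fin n) → EuclideanSpace ℝ (Fin m) → ℝ)
    (hg : ∀ j, Continuous fun p : ℝ × EuclideanSpace ℝ (Fin n) × EuclideanSpace ℝ (Fin m) =>
      g j p.1 p.2.1 p.2.2)
    (h : EuclideanSpace ℝ (Fin n) → ℝ) (hh : Continuous h)
    (V : ℝ → EuclideanSpace ℝ (Fin n) → ℝ)
    (hV : ∀ s ∈ Set.Icc t0 tf, ∀ y, ((V s y : ℝ) : EReal) = fracValue tf U ftil v g h s y)
    (t : ℝ) (ht : t ∈ Set.Ico t0 tf) (x : EuclideanSpace ℝ (Fin n))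
    (hVdiff : DifferentiableAt ℝ (fun p : ℝ × EuclideanSpace ℝ (Fin n) => V p.1 p.2) (t, x))
    (ω : EuclideanSpace ℝ (Fin m)) (hω : ω ∈ U)
    (p : AdmissiblePair tf U ftil t x)
    (hp_rc : ContinuousWithinAt p.u (Set.Ici t) t) (hp_t : p.u t = ω) :
    deriv (fun s => V s x) t
        + (∑ j, (1 / Real.Gamma (v j)) * (tf - t) ^ (v j - 1) * g j t x ω)
        + ⟪gradient (fun y => V t y) x, ftil t x ω⟫ ≥ 0 := by
  classical
  obtain ⟨htt0, httf⟩ := ht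
  have htf : t ≤ tf := le_of_lt httf
  obtain ⟨xg, ug, hxgc, hugm, hugU, hxg, hug⟩ := FracAux.exists_rep p htf hω
  have htmem : t ∈ Icc t tf := left_mem_Icc.2 htf
  have hpxt : p.x t = x := by simpa using p.x_eq t htmem
  have hxgt : xg t = x := by rw [hxg t htmem, hpxt]
  have hugt : ug t = ω := by rw [hug t htmem, hp_t]
  set Fg : ℝ → EuclideanSpace ℝ (Fin n) := fun σ => ftil σ (xg σ) (ug σ) with hFgdef
  set G : Fin r → ℝ → ℝ := fun j σ => (tf - σ) ^ (v j - 1) * g j σ (xg σ) (ug σ) with hGdef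
  have hFgInt : ∀ a b, IntervalIntegrable Fg volume a b :=
    fun a b => FracAux.II_comp hUc hftil hxgc hugm hugU a b
  have hGInt : ∀ j a b, IntervalIntegrable (G j) volume a b := fun j a b =>
    FracAux.II_kernel_comp hUc (hg j) (by linarith [hv j] : (-1:ℝ) < v j - 1) hxgc hugm hugU tf a b
  -- trajectory formula with the global representative integrand
  have hxgeq : ∀ τ ∈ Icc t tf, xg τ = x + ∫ σ in t..τ, Fg σ := by
    intro τ hτ
    rw [hxg τ hτ, p.x_eq τ hτ]
    congr 1
    refine intervalIntegral.integral_congr fun σ hσ => ?_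
    rw [uIcc_of_le hτ.1] at hσ
    have hσ' : σ ∈ Icc t tf := ⟨hσ.1, le_trans hσ.2 hτ.2⟩
    rw [hFgdef]; simp only; rw [hxg σ hσ', hug σ hσ']
  set B : ℝ → ℝ := fun s => ∑ j, (1 / Real.Gamma (v j)) * ∫ σ in t..s, G j σ with hBdef
  have hBt : B t = 0 := by simp [hBdef]
  -- ========== KEY DPP INEQUALITY ==========
  have key : ∀ s ∈ Icc t tf, V t x ≤ B s + V s (xg s) := by
    rintro s ⟨hts, hstf⟩
    rcases eq_or_lt_of_le hts with rfl | hts'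
    · rw [hBt, hxgt]; simp
    · set y := p.x s with hy
      have hsmem : s ∈ Icc t tf := ⟨hts, hstf⟩
      have hxgs : xg s = y := hxg s hsmem
      have hne : ∀ᵐ σ : ℝ, σ ≠ s := by
        refine ae_iff.2 ?_
        simpa [not_not, Set.setOf_eq_eq_singleton] using (measure_singleton (μ := volume) s)
      have hq : ∀ q : AdmissiblePair tf U ftil s y, V t x - B s ≤ fracCost tf v g h q := by
        intro q
        obtain ⟨xq, uq, hxqc, huqm, huqU, hxq, huq⟩ := FracAux.exists_rep q hstf hω
        have hsmem' : s ∈ Icc s tf := left_mem_Icc.2 hstf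
        have hqxs : q.x s = y := by simpa using q.x_eq s hsmem'
        have hxqs : xq s = y := by rw [hxq s hsmem', hqxs]
        set Fq : ℝ → EuclideanSpace ℝ (Fin n) := fun σ => ftil σ (xq σ) (uq σ) with hFqdef
        have hFqInt : ∀ a b, IntervalIntegrable Fq volume a b :=
          fun a b => FracAux.II_comp hUc hftil hxqc huqm huqU a b
        set Gq : Fin r → ℝ → ℝ := fun j σ => (tf - σ) ^ (v j - 1) * g j σ (xq σ) (uq σ) with hGqdef
        have hGqInt : ∀ j a b, IntervalIntegrable (Gq j) volume a b := fun j a b =>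
          FracAux.II_kernel_comp hUc (hg j) (by linarith [hv j] : (-1:ℝ) < v j - 1) hxqc huqm huqU tf a b
        -- concatenated trajectory and control
        set cx : ℝ → EuclideanSpace ℝ (Fin n) := fun τ => if τ ≤ s then xg τ else xq τ with hcx
        set cu : ℝ → EuclideanSpace ℝ (Fin m) := fun τ => if τ < s then ug τ else uq τ with hcu
        have hcx_le : ∀ τ, τ ≤ s → cx τ = xg τ := fun τ hh' => if_pos hh'
        have hcx_gt : ∀ τ, s < τ → cx τ = xq τ := fun τ hh' => if_neg (not_le.2 hh')
        have hcx_ge : ∀ τ, s ≤ τ → cx τ = xq τ := by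
          intro τ hτ
          rcases eq_or_lt_of_le hτ with rfl | hlt
          · exact (if_pos le_rfl).trans (hxgs.trans hxqs.symm)
          · exact hcx_gt τ hlt
        have hcu_lt : ∀ τ, τ < s → cu τ = ug τ := fun τ hh' => if_pos hh'
        have hcu_ge : ∀ τ, s ≤ τ → cu τ = uq τ := fun τ hh' => if_neg (not_lt.2 hh')
        set Fc : ℝ → EuclideanSpace ℝ (Fin n) := fun σ => ftil σ (cx σ) (cu σ) with hFc
        have hFc_lt : ∀ σ, σ < s → Fc σ = Fg σ := by
          intro σ hσ; rw [hFc]; simp only; rw [hcx_le σ hσ.le, hcu_lt σ hσ]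
        have hFc_ge : ∀ σ, s ≤ σ → Fc σ = Fq σ := by
          intro σ hσ; rw [hFc]; simp only; rw [hcx_ge σ hσ, hcu_ge σ hσ]
        have haeFc : ∀ τ, t ≤ τ → τ ≤ s →
            (∀ᵐ σ ∂(volume : Measure ℝ), σ ∈ uIoc t τ → Fc σ = Fg σ) := by
          intro τ htτ hτs
          filter_upwards [hne] with σ hσne hσ
          rw [uIoc_of_le htτ] at hσ
          exact hFc_lt σ (lt_of_le_of_ne (le_trans hσ.2 hτs) hσne)
        have hIFc : ∀ τ, t ≤ τ → τ ≤ s → (∫ σ in t..τ, Fc σ) = ∫ σ in t..τ, Fg σ :=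
          fun τ h1 h2 => intervalIntegral.integral_congr_ae (haeFc τ h1 h2)
        have hFcInt1 : ∀ τ, t ≤ τ → τ ≤ s → IntervalIntegrable Fc volume t τ := fun τ h1 h2 =>
          FracAux.intervalIntegrable_congr_ae
            ((haeFc τ h1 h2).mono fun σ hσ hm => (hσ hm).symm) (hFgInt t τ)
        have hEqOn2 : ∀ τ, s ≤ τ → EqOn Fc Fq (uIcc s τ) := by
          intro τ hτ σ hσ
          rw [uIcc_of_le hτ] at hσ
          exact hFc_ge σ hσ.1
        have hIFc2 : ∀ τ, s ≤ τ → (∫ σ in s..τ, Fc σ) = ∫ σ in s..τ, Fq σ :=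
          fun τ hh' => intervalIntegral.integral_congr (hEqOn2 τ hh')
        have hFcInt2 : ∀ τ, s ≤ τ → IntervalIntegrable Fc volume s τ := fun τ hh' =>
          FracAux.intervalIntegrable_congr_ae
            (Filter.Eventually.of_forall fun σ hσ => (hEqOn2 τ hh' (uIoc_subset_uIcc hσ)).symm)
            (hFqInt s τ)
        have hxqeq : ∀ τ ∈ Icc s tf, xq τ = y + ∫ σ in s..τ, Fq σ := by
          intro τ hτ
          rw [hxq τ hτ, q.x_eq τ hτ]
          congr 1
          refine intervalIntegral.integral_congr fun σ hσ => ?_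
          rw [uIcc_of_le hτ.1] at hσ
          have hσ' : σ ∈ Icc s tf := ⟨hσ.1, le_trans hσ.2 hτ.2⟩
          rw [hFqdef]; simp only; rw [hxq σ hσ', huq σ hσ']
        -- continuity / measurability of the concatenation
        have hcxcont : Continuous cx := by
          rw [hcx]
          refine Continuous.if_le hxgc hxqc continuous_id continuous_const ?_
          intro τ hτ; rw [hτ, hxgs, hxqs]
        have hcumeas : Measurable cu := by
          rw [hcu]
          exact Measurable.ite measurableSet_Iio hugm huqm
        have hcumem : ∀ τ ∈ Icc t tf, cu τ ∈ U := by
          intro τ _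
          by_cases hlt : τ < s
          · rw [hcu_lt τ hlt]; exact hugU τ
          · rw [hcu_ge τ (not_lt.1 hlt)]; exact huqU τ
        -- the integral equation for the concatenation
        have hxeqc : ∀ τ ∈ Icc t tf, cx τ = x + ∫ σ in t..τ, ftil σ (cx σ) (cu σ) := by
          intro τ hτ
          show cx τ = x + ∫ σ in t..τ, Fc σ
          by_cases hτs : τ ≤ s
          · rw [hcx_le τ hτs, hxgeq τ hτ, hIFc τ hτ.1 hτs]
          · push_neg at hτs
            rw [hcx_gt τ hτs, hxqeq τ ⟨hτs.le, hτ.2⟩]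
            have hsplit : (∫ σ in t..s, Fc σ) + (∫ σ in s..τ, Fc σ) = ∫ σ in t..τ, Fc σ :=
              intervalIntegral.integral_add_adjacent_intervals
                (hFcInt1 s hts'.le le_rfl) (hFcInt2 τ hτs.le)
            have h1 : (∫ σ in t..s, Fc σ) = y - x := by
              rw [hIFc s hts'.le le_rfl]
              have h2 := hxgeq s hsmem
              rw [hxgs] at h2
              rw [eq_sub_iff_add_eq, add_comm, ← h2]
            rw [← hsplit, h1, hIFc2 τ hτs.le]
            abel
        -- assemble the admissible pair
        set c : AdmissiblePair tf U ftil t x :=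
          ⟨cx, cu, hcumem, hcumeas.comp measurable_subtype_coe, hcxcont.continuousOn, hxeqc⟩
          with hcdef
        have hVx : ((V t x : ℝ) : EReal) = fracValue tf U ftil v g h t x := hV t ⟨htt0, htf⟩ x
        have h2 : fracValue tf U ftil v g h t x ≤ ((fracCost tf v g h c : ℝ) : EReal) :=
          iInf_le _ c
        rw [← hVx] at h2
        have hVle : V t x ≤ fracCost tf v g h c := EReal.coe_le_coe_iff.1 h2
        -- cost splitting
        have hcxtf : cx tf = q.x tf := by rw [hcx_ge tf hstf, hxq tf (right_mem_Icc.2 hstf)]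
        have hterm : ∀ j, (∫ τ in t..tf, (tf - τ) ^ (v j - 1) * g j τ (cx τ) (cu τ))
            = (∫ σ in t..s, G j σ)
              + ∫ τ in s..tf, (tf - τ) ^ (v j - 1) * g j τ (q.x τ) (q.u τ) := by
          intro j
          have hae1 : ∀ᵐ σ ∂(volume : Measure ℝ), σ ∈ uIoc t s →
              ((tf - σ) ^ (v j - 1) * g j σ (cx σ) (cu σ)) = G j σ := by
            filter_upwards [hne] with σ hσne hσ
            rw [uIoc_of_le hts'.le] at hσ
            have hlt : σ < s := lt_of_le_of_ne hσ.2 hσne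
            rw [hGdef]; simp only
            rw [hcx_le σ hlt.le, hcu_lt σ hlt]
          have hEq2a : EqOn (fun σ => (tf - σ) ^ (v j - 1) * g j σ (cx σ) (cu σ))
              (Gq j) (uIcc s tf) := by
            intro σ hσ
            rw [uIcc_of_le hstf] at hσ
            rw [hGqdef]; simp only
            rw [hcx_ge σ hσ.1, hcu_ge σ hσ.1]
          have hEq2b : EqOn (Gq j)
              (fun σ => (tf - σ) ^ (v j - 1) * g j σ (q.x σ) (q.u σ)) (uIcc s tf) := by
            intro σ hσ
            rw [uIcc_of_le hstf] at hσ
            rw [hGqdef]; simp only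
            rw [hxq σ hσ, huq σ hσ]
          have hint1 : IntervalIntegrable
              (fun σ => (tf - σ) ^ (v j - 1) * g j σ (cx σ) (cu σ)) volume t s :=
            FracAux.intervalIntegrable_congr_ae
              (hae1.mono fun σ hσ hm => (hσ hm).symm) (hGInt j t s)
          have hint2 : IntervalIntegrable
              (fun σ => (tf - σ) ^ (v j - 1) * g j σ (cx σ) (cu σ)) volume s tf :=
            FracAux.intervalIntegrable_congr_ae
              (Filter.Eventually.of_forall fun σ hσ =>
                (hEq2a (uIoc_subset_uIcc hσ)).symm) (hGqInt j s tf)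
          rw [← intervalIntegral.integral_add_adjacent_intervals hint1 hint2]
          congr 1
          · exact intervalIntegral.integral_congr_ae hae1
          · rw [intervalIntegral.integral_congr hEq2a, intervalIntegral.integral_congr hEq2b]
        have hcost : fracCost tf v g h c = B s + fracCost tf v g h q := by
          show (∑ j, (1 / Real.Gamma (v j)) *
              ∫ τ in t..tf, (tf - τ) ^ (v j - 1) * g j τ (cx τ) (cu τ)) + h (cx tf)
            = B s + ((∑ j, (1 / Real.Gamma (v j)) *
              ∫ τ in s..tf, (tf - τ) ^ (v j - 1) * g j τ (q.x τ) (q.u τ)) + h (q.x tf))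
          rw [hcxtf, hBdef]
          simp only [hterm, mul_add, Finset.sum_add_distrib]
          ring
        rw [hcost] at hVle
        linarith
      have h1 : ((V t x - B s : ℝ) : EReal) ≤ fracValue tf U ftil v g h s y :=
        le_iInf fun q => EReal.coe_le_coe_iff.2 (hq q)
      rw [← hV s ⟨le_trans htt0 hts, hstf⟩ y] at h1
      have h2 := EReal.coe_le_coe_iff.1 h1
      rw [hxgs]
      linarith
  -- ========== DERIVATIVES ==========
  have hIccmem : Icc t tf ∈ 𝓝[Ici t] t := by
    rw [← nhdsWithin_Icc_eq_nhdsGE httf]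
    exact self_mem_nhdsWithin
  have hugcwa : ContinuousWithinAt ug (Ici t) t := by
    have hev : ∀ᶠ τ in 𝓝[Ici t] t, ug τ = p.u τ := by
      filter_upwards [hIccmem] with τ hτ
      exact hug τ hτ
    exact hp_rc.congr_of_eventuallyEq hev (hug t htmem)
  have hcurvecwa : ContinuousWithinAt (fun σ : ℝ => (σ, xg σ, ug σ)) (Ici t) t :=
    (continuousWithinAt_id).prodMk ((hxgc.continuousAt.continuousWithinAt).prodMk hugcwa)
  have hGmeas : ∀ j, Measurable (G j) := fun j =>
    ((measurable_const.sub measurable_id).pow measurable_const).mul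
      ((hg j).measurable.comp (measurable_id.prodMk (hxgc.measurable.prodMk hugm)))
  have hGcwa : ∀ j, ContinuousWithinAt (G j) (Ici t) t := by
    intro j
    have hker : ContinuousAt (fun σ : ℝ => (tf - σ) ^ (v j - 1)) t := by
      have h1 : ContinuousAt (fun z : ℝ => z ^ (v j - 1)) (tf - t) :=
        Real.continuousAt_rpow_const _ _ (Or.inl (ne_of_gt (sub_pos.2 httf)))
      exact h1.comp ((continuous_const.sub continuous_id).continuousAt)
    exact (hker.continuousWithinAt).mul ((hg j).continuousAt.comp_continuousWithinAt hcurvecwa)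
  have hBderiv : ∀ j, HasDerivWithinAt (fun s => ∫ σ in t..s, G j σ) (G j t) (Ici t) t :=
    fun j => intervalIntegral.integral_hasDerivWithinAt_right (hGInt j t t)
      ((hGmeas j).stronglyMeasurable.stronglyMeasurableAtFilter)
      ((hGcwa j).mono Ioi_subset_Ici_self)
  have hGt : ∀ j, G j t = (tf - t) ^ (v j - 1) * g j t x ω := by
    intro j; rw [hGdef]; simp only; rw [hxgt, hugt]
  have hBd : HasDerivWithinAt B
      (∑ j, (1 / Real.Gamma (v j)) * ((tf - t) ^ (v j - 1) * g j t x ω)) (Ici t) t := by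
    rw [hBdef]
    refine HasDerivWithinAt.fun_sum fun j _ => ?_
    have := (hBderiv j).const_mul (1 / Real.Gamma (v j))
    rwa [hGt j] at this
  have hFgmeas : Measurable Fg :=
    hftil.measurable.comp (measurable_id.prodMk (hxgc.measurable.prodMk hugm))
  have hFgcwa : ContinuousWithinAt Fg (Ici t) t :=
    hftil.continuousAt.comp_continuousWithinAt hcurvecwa
  have hFgt : Fg t = ftil t x ω := by rw [hFgdef]; simp only; rw [hxgt, hugt]
  have hI : HasDerivWithinAt (fun s => x + ∫ σ in t..s, Fg σ) (ftil t x ω) (Ici t) t := by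
    have h0 : HasDerivWithinAt (fun s => ∫ σ in t..s, Fg σ) (Fg t) (Ici t) t :=
      intervalIntegral.integral_hasDerivWithinAt_right (hFgInt t t)
        (hFgmeas.stronglyMeasurable.stronglyMeasurableAtFilter)
        (hFgcwa.mono Ioi_subset_Ici_self)
    rw [hFgt] at h0
    exact h0.const_add x
  have hxgd : HasDerivWithinAt xg (ftil t x ω) (Ici t) t := by
    refine hI.congr_of_eventuallyEq ?_ ?_
    · filter_upwards [hIccmem] with τ hτ
      exact hxgeq τ hτ
    · simp [hxgt]
  have hγ : HasDerivWithinAt (fun σ : ℝ => (σ, xg σ)) ((1:ℝ), ftil t x ω) (Ici t) t :=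
    (hasDerivWithinAt_id t (Ici t)).prodMk hxgd
  have hVf : HasFDerivAt (fun p : ℝ × EuclideanSpace ℝ (Fin n) => V p.1 p.2)
      (fderiv ℝ (fun p : ℝ × EuclideanSpace ℝ (Fin n) => V p.1 p.2) (t, x)) (t, x) :=
    hVdiff.hasFDerivAt
  set L := fderiv ℝ (fun p : ℝ × EuclideanSpace ℝ (Fin n) => V p.1 p.2) (t, x) with hLdef
  have hVfx : HasFDerivAt (fun p : ℝ × EuclideanSpace ℝ (Fin n) => V p.1 p.2) L
      ((fun σ : ℝ => (σ, xg σ)) t) := by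
    simp only [hxgt]
    exact hVf
  have hcomp : HasDerivWithinAt (fun σ => V σ (xg σ)) (L ((1:ℝ), ftil t x ω)) (Ici t) t :=
    by have hc := hVfx.comp_hasDerivWithinAt t hγ; exact hc
  have hd1 : HasDerivAt (fun s => V s x) (L ((1:ℝ), 0)) t := by
    have hcurve : HasDerivAt (fun s : ℝ => (s, x)) ((1:ℝ), (0 : EuclideanSpace ℝ (Fin n))) t :=
      (hasDerivAt_id t).prodMk (hasDerivAt_const t x)
    exact hVf.comp_hasDerivAt t hcurve
  have hderiv1 : deriv (fun s => V s x) t = L ((1:ℝ), 0) := hd1.deriv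
  have hd2 : HasFDerivAt (fun y => V t y)
      (L.comp (ContinuousLinearMap.inr ℝ ℝ (EuclideanSpace ℝ (Fin n)))) x := by
    have hcurve : HasFDerivAt (fun y : EuclideanSpace ℝ (Fin n) => ((t : ℝ), y))
        (ContinuousLinearMap.inr ℝ ℝ (EuclideanSpace ℝ (Fin n))) x :=
      hasFDerivAt_prodMk_right t x
    exact hVf.comp x hcurve
  have hgrad : (inner ℝ (gradient (fun y => V t y) x) (ftil t x ω) : ℝ)
      = L ((0:ℝ), ftil t x ω) := by
    have h1 : gradient (fun y => V t y) x = (InnerProductSpace.toDual ℝ _).symm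
        (L.comp (ContinuousLinearMap.inr ℝ ℝ (EuclideanSpace ℝ (Fin n)))) := by
      rw [gradient, hd2.fderiv]
    rw [h1, InnerProductSpace.toDual_symm_apply]
    rfl
  have hL1 : L ((1:ℝ), ftil t x ω) = L ((1:ℝ), 0) + L ((0:ℝ), ftil t x ω) := by
    rw [← map_add]
    norm_num
  -- ========== LIMIT ARGUMENT ==========
  have hφ : HasDerivWithinAt (fun s => B s + V s (xg s))
      ((∑ j, (1 / Real.Gamma (v j)) * ((tf - t) ^ (v j - 1) * g j t x ω))
        + L ((1:ℝ), ftil t x ω)) (Ici t) t := hBd.add hcomp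
  have hslope := hasDerivWithinAt_iff_tendsto_slope.1 hφ
  rw [show Ici t \ {t} = Ioi t by
    ext z; simp only [mem_diff, mem_Ici, mem_singleton_iff, mem_Ioi]
    exact ⟨fun hz => lt_of_le_of_ne hz.1 (Ne.symm hz.2), fun hz => ⟨hz.le, ne_of_gt hz⟩⟩] at hslope
  have hnonneg : ∀ᶠ s in 𝓝[Set.Ioi t] t, 0 ≤ slope (fun s => B s + V s (xg s)) t s := by
    have hIcc' : Icc t tf ∈ 𝓝[Set.Ioi t] t :=
      nhdsWithin_mono t Ioi_subset_Ici_self hIccmem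
    filter_upwards [hIcc', self_mem_nhdsWithin] with s hs hsIoi
    have hks := key s hs
    have hφt : B t + V t (xg t) = V t x := by rw [hBt, hxgt]; ring
    rw [slope_def_field]
    apply div_nonneg
    · rw [hφt]; linarith
    · have : t < s := hsIoi
      linarith
  have hD := ge_of_tendsto hslope hnonneg
  rw [ge_iff_le]
  have hsum : (∑ j, (1 / Real.Gamma (v j)) * (tf - t) ^ (v j - 1) * g j t x ω)
      = ∑ j, (1 / Real.Gamma (v j)) * ((tf - t) ^ (v j - 1) * g j t x ω) := by
    refine Finset.sum_congr rfl fun j _ => ?_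
    ring
  rw [hsum, hderiv1]
  have hgrad' : (⟪gradient (fun y => V t y) x, ftil t x ω⟫ : ℝ) = L ((0:ℝ), ftil t x ω) := hgrad
  rw [hgrad']
  rw [hL1] at hD
  linarith
end
end
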